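/- arXiv:1602.07028 — 2 statements merged into one kernel-verified Lean document; each statement's English description precedes it below -/
import Mathlib

section
/- As a graded algebra, R_n(A_n) = ⊕_{γ ∈ Q̃⁺_n} R_n(A_n)_γ, a direct sum of two-sided Z-graded ideals, where R_n(A_n)_γ is the fixed-point subalgebra of R_γ = ⊕_{α∈γ} R_α under sgn. -/
open scoped BigOperators

namespace QH


/-! ### Generalities -/

/-- The fixed-point subalgebra of an algebra endomorphism. -/
def fixedSubalgebra (R : Type*) {A : Type*} [CommSemiring R] [Semiring A] [Algebra R A]
    (f : A →ₐ[R] A) : Subalgebra R A where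
  carrier := {a | f a = a}
  mul_mem' := fun {a b} ha hb => by
    simp only [Set.mem_setOf_eq] at *
    rw [map_mul, ha, hb]
  add_mem' := fun {a b} ha hb => by
    simp only [Set.mem_setOf_eq] at *
    rw [map_add, ha, hb]
  algebraMap_mem' := fun r => by simp

/-! ### Quantum integers -/

/-- The quantum integer `[k]_t`. -/
def qint {K : Type*} [Field K] (t : K) (k : ℤ) : K :=
  if 0 ≤ k then ∑ j ∈ Finset.range k.toNat, t ^ (j : ℤ)
  else -∑ j ∈ Finset.range (-k).toNat, t ^ (-(j : ℤ) - 1)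

/-- The Poincaré polynomial `P_H(t) = [1][2]⋯[n]`. -/
def poincare {K : Type*} [Field K] (t : K) (n : ℕ) : K :=
  ∏ k ∈ Finset.Icc 1 n, qint t (k : ℤ)

/-- `ξ` has quantum characteristic `e` (finite). -/
def IsQuantumChar {F : Type*} [Field F] (ξ : F) (e : ℕ) : Prop :=
  ξ ≠ 0 ∧ 0 < e ∧ (∑ k ∈ Finset.range e, ξ ^ k = 0) ∧
    ∀ m, 0 < m → m < e → (∑ k ∈ Finset.range m, ξ ^ k) ≠ 0

/-- `F` is large enough for `ξ` of quantum characteristic `e`. -/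
def LargeEnough {F : Type*} [Field F] (ξ : F) (e : ℕ) : Prop :=
  3 < e → (∃ a : F, a ^ 2 = ξ) ∧ ∃ b : F, b ^ 2 = 1 + ξ + ξ ^ 2

/-! ### The Iwahori–Hecke algebra of the symmetric group -/

/-- Defining relations of the Iwahori–Hecke algebra on `m` generators. -/
inductive HeckeRel (Z : Type*) [CommRing Z] (ξ : Z) (m : ℕ) :
    FreeAlgebra Z (Fin m) → FreeAlgebra Z (Fin m) → Prop
  | quad (r : Fin m) :
      HeckeRel Z ξ m ((FreeAlgebra.ι Z r - algebraMap Z _ ξ) * (FreeAlgebra.ι Z r + 1)) 0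
  | comm (r s : Fin m) (h : (r : ℕ) + 1 < s) :
      HeckeRel Z ξ m (FreeAlgebra.ι Z r * FreeAlgebra.ι Z s)
        (FreeAlgebra.ι Z s * FreeAlgebra.ι Z r)
  | braid (r s : Fin m) (h : (s : ℕ) = r + 1) :
      HeckeRel Z ξ m (FreeAlgebra.ι Z r * FreeAlgebra.ι Z s * FreeAlgebra.ι Z r)
        (FreeAlgebra.ι Z s * FreeAlgebra.ι Z r * FreeAlgebra.ι Z s)

/-- The Iwahori–Hecke algebra `H_ξ(S_n)`, with generators `T_1, …, T_{n-1}`. -/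
abbrev Hecke (Z : Type*) [CommRing Z] (ξ : Z) (n : ℕ) := RingQuot (HeckeRel Z ξ (n - 1))

/-- The generator `T_r` of the Iwahori–Hecke algebra (`r` is 0-indexed). -/
noncomputable def Tgen (Z : Type*) [CommRing Z] (ξ : Z) (n : ℕ) (r : Fin (n - 1)) :
    Hecke Z ξ n :=
  RingQuot.mkAlgHom Z (HeckeRel Z ξ (n - 1)) (FreeAlgebra.ι Z r)

/-- `φ` is the hash involution `#`: the automorphism with `T_r^# = -T_r + (ξ-1)`. -/
def HashSpec (Z : Type*) [CommRing Z] (ξ : Z) (n : ℕ)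
    (φ : Hecke Z ξ n ≃ₐ[Z] Hecke Z ξ n) : Prop :=
  ∀ r, φ (Tgen Z ξ n r) = - Tgen Z ξ n r + algebraMap Z _ (ξ - 1)

/-- The word `s_a s_{a+1} ⋯ s_{b-1} s_{b-2} ⋯ s_a` for the transposition `(a, b)`,
in terms of 1-indexed Coxeter generators. -/
def transWord (a b : ℕ) : List ℕ :=
  (List.range' a (b - a)) ++ (List.range' a (b - 1 - a)).reverse

/-- The product `T_w` of Hecke generators along a word (1-indexed entries). -/
noncomputable def Tword (Z : Type*) [CommRing Z] (ξ : Z) (n : ℕ) (w : List ℕ) :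
    Hecke Z ξ n :=
  (w.map (fun m => if h : m - 1 < n - 1 then Tgen Z ξ n ⟨m - 1, h⟩ else 1)).prod

/-- The Jucys–Murphy element `L_k = ∑_{j=1}^{k-1} t^{j-k} T_{(k-j,k)}`. -/
noncomputable def JM (K : Type*) [Field K] (t : K) (n : ℕ) (k : ℕ) : Hecke K t n :=
  ∑ j ∈ Finset.Icc 1 (k - 1), (t ^ ((j : ℤ) - (k : ℤ))) • Tword K t n (transWord (k - j) k)



/-! ### Standard tableaux -/

/-- A standard tableau of shape `μ`: a filling of the cells of `μ` by `1, …, |μ|`,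
increasing along rows and down columns (and `0` off the diagram). -/
structure StdTableau (μ : YoungDiagram) where
  entry : ℕ × ℕ → ℕ
  zero_off : ∀ c, c ∉ μ → entry c = 0
  mem_entry : ∀ c ∈ μ, entry c ∈ Finset.Icc 1 μ.card
  injOn : Set.InjOn entry ↑μ.cells
  surjOn : ∀ m ∈ Finset.Icc 1 μ.card, ∃ c ∈ μ, entry c = m
  row_lt : ∀ r c₁ c₂, (r, c₁) ∈ μ → (r, c₂) ∈ μ → c₁ < c₂ → entry (r, c₁) < entry (r, c₂)
  col_lt : ∀ r₁ r₂ c, (r₁, c) ∈ μ → (r₂, c) ∈ μ → r₁ < r₂ → entry (r₁, c) < entry (r₂, c)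

namespace StdTableau

variable {μ : YoungDiagram}

/-- The cell of a standard tableau containing the entry `m`. -/
noncomputable def cellOf (T : StdTableau μ) (m : ℕ) : ℕ × ℕ :=
  Function.invFunOn T.entry ↑μ.cells m

/-- The content `c_m(T) = col - row` of the entry `m` of `T`. -/
noncomputable def contentAt (T : StdTableau μ) (m : ℕ) : ℤ :=
  ((T.cellOf m).2 : ℤ) - ((T.cellOf m).1 : ℤ)

/-- The `e`-residue of the entry `m` of `T`. -/
noncomputable def resAt (e : ℕ) (T : StdTableau μ) (m : ℕ) : ZMod e :=
  ((T.cellOf m).2 : ZMod e) - ((T.cellOf m).1 : ZMod e)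

/-- The `e`-residue sequence of `T`, as a function `Fin n → ZMod e`
(meaningful when `μ.card = n`). -/
noncomputable def resSeq (e n : ℕ) (T : StdTableau μ) : Fin n → ZMod e :=
  fun k => T.resAt e (k.1 + 1)

/-- The axial distance `ρ_r(T) = c_r(T) - c_{r+1}(T)`. -/
noncomputable def axial (T : StdTableau μ) (r : ℕ) : ℤ :=
  T.contentAt r - T.contentAt (r + 1)

end StdTableau

theorem card_transpose (μ : YoungDiagram) : μ.transpose.card = μ.card := by
  classical
  refine Finset.card_bij (fun c _ => Prod.swap c) ?_ ?_ ?_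
  · intro a ha
    rw [YoungDiagram.mem_cells] at ha ⊢
    exact YoungDiagram.mem_transpose.mp ha
  · intro a _ b _ h
    exact Prod.swap_injective h
  · intro b hb
    refine ⟨b.swap, ?_, by simp⟩
    rw [YoungDiagram.mem_cells] at hb ⊢
    rw [YoungDiagram.mem_transpose]
    simpa using hb

/-- The conjugate (transposed) standard tableau. -/
def StdTableau.conj {μ : YoungDiagram} (T : StdTableau μ) : StdTableau μ.transpose where
  entry c := T.entry c.swap
  zero_off c hc := T.zero_off _ (fun h => hc (YoungDiagram.mem_transpose.mpr h))
  mem_entry c hc := by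
    rw [card_transpose]
    exact T.mem_entry _ (YoungDiagram.mem_transpose.mp hc)
  injOn := by
    intro a ha b hb h
    have ha' : a.swap ∈ (↑μ.cells : Set (ℕ × ℕ)) := by
      simp only [Finset.mem_coe, YoungDiagram.mem_cells] at ha ⊢
      exact YoungDiagram.mem_transpose.mp ha
    have hb' : b.swap ∈ (↑μ.cells : Set (ℕ × ℕ)) := by
      simp only [Finset.mem_coe, YoungDiagram.mem_cells] at hb ⊢
      exact YoungDiagram.mem_transpose.mp hb
    exact Prod.swap_injective (T.injOn ha' hb' h)
  surjOn m hm := by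
    rw [card_transpose] at hm
    obtain ⟨c, hc, hco⟩ := T.surjOn m hm
    exact ⟨c.swap, YoungDiagram.mem_transpose.mpr (by simpa using hc), by simpa using hco⟩
  row_lt r c₁ c₂ h1 h2 hlt :=
    T.col_lt c₁ c₂ r (YoungDiagram.mem_transpose.mp h1) (YoungDiagram.mem_transpose.mp h2) hlt
  col_lt r₁ r₂ c h1 h2 hlt :=
    T.row_lt c r₁ r₂ (YoungDiagram.mem_transpose.mp h1) (YoungDiagram.mem_transpose.mp h2) hlt



/-- A standard tableau with `n` boxes (bundled with its shape). -/
def StdTab (n : ℕ) := {p : Σ μ : YoungDiagram, StdTableau μ // p.1.card = n}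

/-- A pair of standard tableaux of the same shape with `n` boxes. -/
def StdPair (n : ℕ) := {p : Σ μ : YoungDiagram, StdTableau μ × StdTableau μ // p.1.card = n}

namespace StdTab

variable {n : ℕ}

def shape (s : StdTab n) : YoungDiagram := s.1.1
def tab (s : StdTab n) : StdTableau s.shape := s.1.2

end StdTab

namespace StdPair

variable {n : ℕ}

def left (p : StdPair n) : StdTab n := ⟨⟨p.1.1, p.1.2.1⟩, p.2⟩
def right (p : StdPair n) : StdTab n := ⟨⟨p.1.1, p.1.2.2⟩, p.2⟩

end StdPair

/-- Transport of standard tableaux along an equality of shapes. -/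
def castTab {μ ν : YoungDiagram} (h : μ = ν) (T : StdTableau μ) : StdTableau ν := h ▸ T

/-- The diagonal pair `(s, s)`. -/
def StdTab.diag {n : ℕ} (s : StdTab n) : StdPair n := ⟨⟨s.1.1, s.1.2, s.1.2⟩, s.2⟩

/-- The pair built from two tableaux of the same shape. -/
def mkPair {n : ℕ} (a b : StdTab n) (h : a.1.1 = b.1.1) : StdPair n :=
  ⟨⟨a.1.1, a.1.2, castTab h.symm b.1.2⟩, a.2⟩

/-- Composite pair `(p.left, q.right)` when `p.right = q.left`. -/
def StdPair.comp {n : ℕ} (p q : StdPair n) (h : p.right = q.left) : StdPair n := by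
  refine ⟨⟨p.1.1, p.1.2.1, castTab ?_ q.1.2.2⟩, p.2⟩
  exact (congrArg (fun s : StdTab n => s.1.1) h).symm

/-- Swap the two members of a pair. -/
def StdPair.swap {n : ℕ} (p : StdPair n) : StdPair n := ⟨⟨p.1.1, p.1.2.2, p.1.2.1⟩, p.2⟩

/-! ### Degrees of standard tableaux (Brundan–Kleshchev–Wang) -/

namespace StdTableau

variable {μ : YoungDiagram}

/-- Length of row `r` of the subdiagram of cells of `T` with entry `≤ m`. -/
noncomputable def rowLenLe (T : StdTableau μ) (m r : ℕ) : ℕ := by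
  classical
  exact (μ.cells.filter (fun c => c.1 = r ∧ T.entry c ≤ m)).card

/-- Row `r` carries an addable node of the shape `T_{≤ m}`. -/
def IsAddable (T : StdTableau μ) (m r : ℕ) : Prop :=
  r = 0 ∨ T.rowLenLe m r < T.rowLenLe m (r - 1)

/-- The residue of the addable node of `T_{≤m}` in row `r`. -/
noncomputable def addableRes (e : ℕ) (T : StdTableau μ) (m r : ℕ) : ZMod e :=
  (T.rowLenLe m r : ZMod e) - (r : ZMod e)

/-- Row `r` carries a removable node of the shape `T_{≤ m}`. -/
def IsRemovable (T : StdTableau μ) (m r : ℕ) : Prop :=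
  T.rowLenLe m (r + 1) < T.rowLenLe m r

/-- The residue of the removable node of `T_{≤m}` in row `r`. -/
noncomputable def removableRes (e : ℕ) (T : StdTableau μ) (m r : ℕ) : ZMod e :=
  (T.rowLenLe m r : ZMod e) - 1 - (r : ZMod e)

noncomputable def resAt' (e : ℕ) (T : StdTableau μ) (m : ℕ) : ZMod e :=
  ((T.cellOf m).2 : ZMod e) - ((T.cellOf m).1 : ZMod e)

/-- The contribution `d_A(λ)` of the entry `m` to the degree of `T`:
the number of addable nodes of residue `res_m(T)` strictly below the cell of `m`
in the shape `T_{≤m}`, minus the number of removable ones. -/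
noncomputable def degTerm (e : ℕ) (T : StdTableau μ) (m : ℕ) : ℤ := by
  classical
  exact
    (((Finset.range (μ.card + 1)).filter (fun r =>
        (T.cellOf m).1 < r ∧ T.IsAddable m r ∧ T.addableRes e m r = T.resAt' e m)).card : ℤ) -
    (((Finset.range (μ.card + 1)).filter (fun r =>
        (T.cellOf m).1 < r ∧ T.IsRemovable m r ∧ T.removableRes e m r = T.resAt' e m)).card : ℤ)

/-- The Brundan–Kleshchev–Wang degree of a standard tableau. -/
noncomputable def deg (e : ℕ) (T : StdTableau μ) : ℤ :=
  ∑ m ∈ Finset.Icc 1 μ.card, T.degTerm e m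

end StdTableau

noncomputable def StdTab.deg {n : ℕ} (e : ℕ) (s : StdTab n) : ℤ := s.1.2.deg e

noncomputable def StdTab.resSeqT {n : ℕ} (e : ℕ) (s : StdTab n) : Fin n → ZMod e :=
  fun k => ((s.1.2.cellOf (k.1 + 1)).2 : ZMod e) - ((s.1.2.cellOf (k.1 + 1)).1 : ZMod e)

/-- The set `I^n_+` of residue sequences starting `0, +1`. -/
def IPlus (e n : ℕ) : Set (Fin n → ZMod e) :=
  {i | ∃ (h0 : 0 < n) (h1 : 1 < n), i ⟨0, h0⟩ = 0 ∧ i ⟨1, h1⟩ = 1}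

/-- `u` is obtained from `s` by swapping the entries `r` and `r + 1`. -/
def IsEntrySwap {n : ℕ} (u s : StdTab n) (r : ℕ) : Prop :=
  u.1.1 = s.1.1 ∧ ∀ c, u.1.2.entry c =
    (if s.1.2.entry c = r then r + 1 else if s.1.2.entry c = r + 1 then r else s.1.2.entry c)

/-- Dominance order on Young diagrams. -/
def Dominates (μ ν : YoungDiagram) : Prop :=
  ∀ k, ∑ r ∈ Finset.range k, ν.rowLen r ≤ ∑ r ∈ Finset.range k, μ.rowLen r



/-! ### Quiver Hecke (KLR) algebras of type A, level 1 (`Λ = Λ_0`) -/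

/-- Residue sequences: `I^n` with `I = ℤ/eℤ`. -/
abbrev nseq (e n : ℕ) := Fin n → ZMod e

/-- The action of the simple transposition `s_r` on residue sequences (0-indexed). -/
def swapSeq {e n : ℕ} (r : ℕ) (h : r + 1 < n) (i : nseq e n) : nseq e n :=
  i ∘ Equiv.swap ⟨r, Nat.lt_of_succ_lt h⟩ ⟨r + 1, h⟩

/-- The Cartan matrix of the quiver `Γ_e`. -/
def cartan (e : ℕ) (i j : ZMod e) : ℤ :=
  if i = j then 2 else if j = i + 1 ∨ i = j + 1 then -1 else 0

/-- Generators of the quiver Hecke algebra: `ψ_r`, `y_s` and the idempotents `e(i)`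
for `i` in a prescribed set `S` of residue sequences (all indices 0-indexed). -/
inductive KLRGen (e n : ℕ) (S : Finset (nseq e n)) : Type
  | psi (r : ℕ) (h : r + 1 < n)
  | y (s : ℕ) (h : s < n)
  | idem (i : nseq e n) (hi : i ∈ S)

variable (Z : Type*) [CommRing Z] (e n : ℕ) (S : Finset (nseq e n))

/-- `ψ_r` in the free algebra. -/
def fψ (r : ℕ) (h : r + 1 < n) : FreeAlgebra Z (KLRGen e n S) :=
  FreeAlgebra.ι Z (KLRGen.psi r h)

/-- `y_s` in the free algebra. -/
def fy (s : ℕ) (h : s < n) : FreeAlgebra Z (KLRGen e n S) :=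
  FreeAlgebra.ι Z (KLRGen.y s h)

/-- `e(i)` in the free algebra. -/
def fe (i : nseq e n) (hi : i ∈ S) : FreeAlgebra Z (KLRGen e n S) :=
  FreeAlgebra.ι Z (KLRGen.idem i hi)

/-- The defining relations of the cyclotomic quiver Hecke algebra `R(Γ_e, Λ_0)`
(Brundan–Kleshchev relations), with idempotents indexed by `S`. -/
inductive KLRRel : FreeAlgebra Z (KLRGen e n S) → FreeAlgebra Z (KLRGen e n S) → Prop
  | cyc (i : nseq e n) (hi : i ∈ S) (h0 : 0 < n) :
      KLRRel ((fy Z e n S 0 h0) ^ (if i ⟨0, h0⟩ = 0 then 1 else 0) * fe Z e n S i hi) 0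
  | idem_mul (i j : nseq e n) (hi : i ∈ S) (hj : j ∈ S) :
      KLRRel (fe Z e n S i hi * fe Z e n S j hj) (if i = j then fe Z e n S i hi else 0)
  | idem_sum : KLRRel (∑ i ∈ S.attach, fe Z e n S i.1 i.2) 1
  | y_idem (s : ℕ) (hs : s < n) (i : nseq e n) (hi : i ∈ S) :
      KLRRel (fy Z e n S s hs * fe Z e n S i hi) (fe Z e n S i hi * fy Z e n S s hs)
  | psi_idem (r : ℕ) (h : r + 1 < n) (i : nseq e n) (hi : i ∈ S) (hsi : swapSeq r h i ∈ S) :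
      KLRRel (fψ Z e n S r h * fe Z e n S i hi)
        (fe Z e n S (swapSeq r h i) hsi * fψ Z e n S r h)
  | yy (s : ℕ) (hs : s < n) (u : ℕ) (hu : u < n) :
      KLRRel (fy Z e n S s hs * fy Z e n S u hu) (fy Z e n S u hu * fy Z e n S s hs)
  | psi_y_succ (r : ℕ) (h : r + 1 < n) (i : nseq e n) (hi : i ∈ S) :
      KLRRel (fψ Z e n S r h * fy Z e n S (r + 1) h * fe Z e n S i hi)
        ((fy Z e n S r (Nat.lt_of_succ_lt h) * fψ Z e n S r h +
          if i ⟨r, Nat.lt_of_succ_lt h⟩ = i ⟨r + 1, h⟩ then 1 else 0) * fe Z e n S i hi)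
  | y_succ_psi (r : ℕ) (h : r + 1 < n) (i : nseq e n) (hi : i ∈ S) :
      KLRRel (fy Z e n S (r + 1) h * fψ Z e n S r h * fe Z e n S i hi)
        ((fψ Z e n S r h * fy Z e n S r (Nat.lt_of_succ_lt h) +
          if i ⟨r, Nat.lt_of_succ_lt h⟩ = i ⟨r + 1, h⟩ then 1 else 0) * fe Z e n S i hi)
  | psi_y_far (r : ℕ) (h : r + 1 < n) (s : ℕ) (hs : s < n) (hfar : s ≠ r ∧ s ≠ r + 1) :
      KLRRel (fψ Z e n S r h * fy Z e n S s hs) (fy Z e n S s hs * fψ Z e n S r h)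
  | psi_psi_far (r : ℕ) (h : r + 1 < n) (s : ℕ) (hs : s + 1 < n)
      (hfar : r + 1 < s ∨ s + 1 < r) :
      KLRRel (fψ Z e n S r h * fψ Z e n S s hs) (fψ Z e n S s hs * fψ Z e n S r h)
  | quad (r : ℕ) (h : r + 1 < n) (i : nseq e n) (hi : i ∈ S) :
      KLRRel (fψ Z e n S r h ^ 2 * fe Z e n S i hi)
        (if i ⟨r, Nat.lt_of_succ_lt h⟩ = i ⟨r + 1, h⟩ then 0
         else if i ⟨r + 1, h⟩ = i ⟨r, Nat.lt_of_succ_lt h⟩ + 1 then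
          (fy Z e n S r (Nat.lt_of_succ_lt h) - fy Z e n S (r + 1) h) * fe Z e n S i hi
         else if i ⟨r, Nat.lt_of_succ_lt h⟩ = i ⟨r + 1, h⟩ + 1 then
          (fy Z e n S (r + 1) h - fy Z e n S r (Nat.lt_of_succ_lt h)) * fe Z e n S i hi
         else fe Z e n S i hi)
  | braid (r : ℕ) (h2 : r + 2 < n) (i : nseq e n) (hi : i ∈ S) :
      KLRRel
        (fψ Z e n S r (Nat.lt_of_succ_lt h2) * fψ Z e n S (r + 1) h2 *
            fψ Z e n S r (Nat.lt_of_succ_lt h2) * fe Z e n S i hi)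
        (fψ Z e n S (r + 1) h2 * fψ Z e n S r (Nat.lt_of_succ_lt h2) *
            fψ Z e n S (r + 1) h2 * fe Z e n S i hi +
          (if i ⟨r, by omega⟩ = i ⟨r + 2, h2⟩ ∧ i ⟨r + 1, by omega⟩ = i ⟨r, by omega⟩ + 1
            then -1
           else if i ⟨r, by omega⟩ = i ⟨r + 2, h2⟩ ∧ i ⟨r, by omega⟩ = i ⟨r + 1, by omega⟩ + 1
            then 1
           else 0) * fe Z e n S i hi)

/-- The cyclotomic quiver Hecke algebra with idempotents indexed by `S`.
Taking `S = Finset.univ` gives `R_n(S_n) = ⊕_{α ∈ Q⁺_n} R_α`; taking `S = I^α`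
gives the block `R_α`. -/
abbrev KLR := RingQuot (KLRRel Z e n S)

/-- The generator `ψ_r` of the quiver Hecke algebra. -/
noncomputable def Ψgen (r : ℕ) (h : r + 1 < n) : KLR Z e n S :=
  RingQuot.mkAlgHom Z (KLRRel Z e n S) (fψ Z e n S r h)

/-- The generator `y_s` of the quiver Hecke algebra. -/
noncomputable def Ygen (s : ℕ) (hs : s < n) : KLR Z e n S :=
  RingQuot.mkAlgHom Z (KLRRel Z e n S) (fy Z e n S s hs)

/-- The idempotent generator `e(i)` of the quiver Hecke algebra. -/
noncomputable def Egen (i : nseq e n) (hi : i ∈ S) : KLR Z e n S :=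
  RingQuot.mkAlgHom Z (KLRRel Z e n S) (fe Z e n S i hi)

/-- `σ` is the sign automorphism `sgn` of a quiver Hecke algebra:
`ψ_r ↦ -ψ_r`, `y_s ↦ -y_s`, `e(i) ↦ e(-i)`. -/
def SgnSpec (σ : KLR Z e n S ≃ₐ[Z] KLR Z e n S) : Prop :=
  (∀ (r : ℕ) (h : r + 1 < n), σ (Ψgen Z e n S r h) = - Ψgen Z e n S r h) ∧
  (∀ (s : ℕ) (hs : s < n), σ (Ygen Z e n S s hs) = - Ygen Z e n S s hs) ∧
  (∀ (i : nseq e n) (hi : i ∈ S) (hni : -i ∈ S),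
    σ (Egen Z e n S i hi) = Egen Z e n S (-i) hni)

/-- A family of submodules is *the* `ℤ`-grading of the quiver Hecke algebra if it is an
algebra grading for which the KLR generators are homogeneous of the degrees
`deg e(i) = 0`, `deg y_s = 2`, `deg ψ_r e(i) = -c_{i_r, i_{r+1}}`. -/
def KLRGradingSpec (𝒜 : ℤ → Submodule Z (KLR Z e n S)) : Prop :=
  (∀ (i : nseq e n) (hi : i ∈ S), Egen Z e n S i hi ∈ 𝒜 0) ∧
  (∀ (s : ℕ) (hs : s < n), Ygen Z e n S s hs ∈ 𝒜 2) ∧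
  (∀ (r : ℕ) (h : r + 1 < n) (i : nseq e n) (hi : i ∈ S),
    Ψgen Z e n S r h * Egen Z e n S i hi ∈
      𝒜 (- cartan e (i ⟨r, Nat.lt_of_succ_lt h⟩) (i ⟨r + 1, h⟩)))

/-! ### Blocks -/

/-- The multiset of residues of a sequence (i.e. the positive root `α` with `i ∈ I^α`). -/
def mult {e n : ℕ} (i : nseq e n) : Multiset (ZMod e) := Finset.univ.val.map i

/-- The equivalence `i ∼ j` on `I^n` induced by `α ∼ α'`: same multiset of residues
up to simultaneous negation. -/
def gammaRel (e n : ℕ) (i j : nseq e n) : Prop :=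
  mult i = mult j ∨ mult i = (mult j).map (fun x => -x)

theorem gammaRel_equiv (e n : ℕ) : Equivalence (gammaRel e n) := by
  constructor
  · intro i; exact Or.inl rfl
  · intro i j h
    rcases h with h | h
    · exact Or.inl h.symm
    · right
      rw [h, Multiset.map_map]
      simp [Function.comp]
  · intro i j k hij hjk
    rcases hij with h | h <;> rcases hjk with h' | h'
    · exact Or.inl (h.trans h')
    · exact Or.inr (by rw [h, h'])
    · exact Or.inr (by rw [h, h'])
    · left
      rw [h, h', Multiset.map_map]
      simp [Function.comp]

/-- The setoid on `I^n` whose classes correspond to `Q̃⁺_n = Q⁺_n/∼`. -/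
def gammaSetoid (e n : ℕ) : Setoid (nseq e n) := ⟨gammaRel e n, gammaRel_equiv e n⟩

/-- `Q̃⁺_n`, realised as classes of residue sequences. -/
def Qtilde (e n : ℕ) : Type := Quotient (gammaSetoid e n)

/-- The class of a residue sequence in `Q̃⁺_n`. -/
def gammaOf {e n : ℕ} (i : nseq e n) : Qtilde e n := Quotient.mk (gammaSetoid e n) i

/-- `I^γ`, as a finset of residue sequences. -/
noncomputable def Iγ (e n : ℕ) [NeZero e] (γ : Qtilde e n) : Finset (nseq e n) := by
  classical
  exact Finset.univ.filter (fun i => gammaOf i = γ)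

/-- `I^α`, the finset of sequences of residue content `α`. -/
noncomputable def Iα (e n : ℕ) [NeZero e] (α : Multiset (ZMod e)) : Finset (nseq e n) := by
  classical
  exact Finset.univ.filter (fun i => mult i = α)


/-! ### Seminormal forms -/

namespace StdTab

/-- The content `c_m(s)` of the entry `m`. -/
noncomputable def contentT {n : ℕ} (s : StdTab n) (m : ℕ) : ℤ := s.1.2.contentAt m

/-- The conjugate (transposed) tableau. -/
noncomputable def conjT {n : ℕ} (s : StdTab n) : StdTab n :=
  ⟨⟨s.1.1.transpose, s.1.2.conj⟩, by rw [card_transpose]; exact s.2⟩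

/-- The axial distance `ρ_r(s) = c_r(s) - c_{r+1}(s)`. -/
noncomputable def axialT {n : ℕ} (s : StdTab n) (r : ℕ) : ℤ :=
  s.contentT r - s.contentT (r + 1)

end StdTab

/-- A `*`-seminormal coefficient system (Hu–Mathas). -/
def IsSNCoeffSystem (K : Type*) [Field K] (t : K) (n : ℕ) (α : ℕ → StdTab n → K) : Prop :=
  (∀ (r : ℕ) (s : StdTab n), 1 ≤ r → r < n →
      (¬ ∃ u, IsEntrySwap u s r) → α r s = 0) ∧
  (∀ (r k : ℕ) (s u v : StdTab n), 1 ≤ r → r < n → 1 ≤ k → k < n →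
      (r + 1 < k ∨ k + 1 < r) →
      IsEntrySwap u s r → IsEntrySwap v s k →
      α r s * α k u = α k s * α r v) ∧
  (∀ (r : ℕ) (s u1 u2 v1 v2 : StdTab n), 1 ≤ r → r + 1 < n →
      IsEntrySwap u1 s r → IsEntrySwap u2 u1 (r + 1) →
      IsEntrySwap v1 s (r + 1) → IsEntrySwap v2 v1 r →
      α r u2 * α (r + 1) u1 * α r s = α (r + 1) v2 * α r v1 * α (r + 1) s) ∧
  (∀ (r : ℕ) (s v : StdTab n), 1 ≤ r → r < n → IsEntrySwap v s r →
      α r s * α r v =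
        qint t (1 + s.axialT r) * qint t (1 + v.axialT r) /
          (qint t (s.axialT r) * qint t (v.axialT r)))

/-- A seminormal basis of the Hecke algebra, with structure constants `γ`:
a basis of simultaneous eigenvectors for the Jucys–Murphy elements satisfying
`f_{st} f_{uv} = δ_{tu} γ_t f_{sv}`. -/
structure IsSNBasis (K : Type*) [Field K] (t : K) (n : ℕ)
    (f : StdPair n → Hecke K t n) (γ : StdTab n → K) : Prop where
  indep : LinearIndependent K f
  span : ⊤ ≤ Submodule.span K (Set.range f)
  eigL : ∀ (p : StdPair n) (k : ℕ), 1 ≤ k → k ≤ n →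
    JM K t n k * f p = qint t (p.left.contentT k) • f p
  eigR : ∀ (p : StdPair n) (k : ℕ), 1 ≤ k → k ≤ n →
    f p * JM K t n k = qint t (p.right.contentT k) • f p
  gammaMul : ∀ (p q : StdPair n) (h : p.right = q.left),
    f p * f q = γ p.right • f (p.comp q h)
  gammaOrth : ∀ p q : StdPair n, p.right ≠ q.left → f p * f q = 0
  gammaNe : ∀ s : StdTab n, γ s ≠ 0

/-- The seminormal basis `f` is associated to the seminormal coefficient system `α`:
`T_r f_{st} = α_r(s) f_{ut} - [ρ_r(s)]⁻¹ f_{st}` where `u = (r, r+1)s`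
(and the first term is omitted when `u` is not standard). -/
def SNTact (K : Type*) [Field K] (t : K) (n : ℕ) (f : StdPair n → Hecke K t n)
    (α : ℕ → StdTab n → K) : Prop :=
  ∀ (p : StdPair n) (r : ℕ) (hr : 1 ≤ r) (hrn : r < n),
    (∀ (u : StdTab n) (hu : IsEntrySwap u p.left r),
      Tgen K t n ⟨r - 1, by omega⟩ * f p =
        α r p.left • f (mkPair u p.right hu.1) - (qint t (p.left.axialT r))⁻¹ • f p) ∧
    ((¬ ∃ u, IsEntrySwap u p.left r) →
      Tgen K t n ⟨r - 1, by omega⟩ * f p = - (qint t (p.left.axialT r))⁻¹ • f p)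

/-- `st` is the unique anti-automorphism `*` of the Hecke algebra fixing the generators. -/
def IsStarHecke (K : Type*) [Field K] (t : K) (n : ℕ)
    (st : Hecke K t n →ₗ[K] Hecke K t n) : Prop :=
  (∀ x y, st (x * y) = st y * st x) ∧ ∀ r, st (Tgen K t n r) = Tgen K t n r

/-- The basis `f` is a `*`-seminormal basis: `f_{st}^* = f_{ts}`. -/
def IsStarBasis {K : Type*} [Field K] {t : K} {n : ℕ}
    (st : Hecke K t n →ₗ[K] Hecke K t n) (f : StdPair n → Hecke K t n) : Prop :=
  ∀ p, st (f p) = f p.swap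

/-- `(O, t)` is an `e`-idempotent subring of `K`. -/
structure IsIdemSubring (K : Type*) [Field K] (O : Subring K) (t : K) (e n : ℕ) : Prop where
  t_mem : t ∈ O
  t_unit : ∃ u ∈ O, t * u = 1
  qint_mem : ∀ k : ℤ, qint t k ∈ O
  ph_ne : poincare t n ≠ 0
  qint_unit : ∀ k : ℤ, ¬((e : ℤ) ∣ k) → ∃ u ∈ O, qint t k * u = 1
  qint_jac : ∀ k : ℤ, (e : ℤ) ∣ k →
    (⟨qint t k, qint_mem k⟩ : O) ∈ Ideal.jacobson (⊥ : Ideal O)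

/-- The Hecke algebra `H^O` over the subring `O`, realised as the subring of `H^K`
generated by (the image of) `O` and the generators `T_r`. -/
def HOsub (K : Type*) [Field K] (t : K) (n : ℕ) (O : Subring K) : Subring (Hecke K t n) :=
  Subring.closure ((fun o : K => algebraMap K (Hecke K t n) o) '' ↑O ∪ Set.range (Tgen K t n))

/-- The primitive idempotent `F_s = γ_s⁻¹ f_{ss}`. -/
noncomputable def Fidem (K : Type*) [Field K] (t : K) (n : ℕ)
    (f : StdPair n → Hecke K t n) (γ : StdTab n → K) (s : StdTab n) : Hecke K t n :=
  (γ s)⁻¹ • f s.diag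

/-- The residue idempotent `f_i^O = ∑_{s ∈ Std(i)} F_s`. -/
noncomputable def fres (K : Type*) [Field K] (t : K) (e n : ℕ)
    (f : StdPair n → Hecke K t n) (γ : StdTab n → K) (i : nseq e n) : Hecke K t n :=
  ∑ᶠ (s : StdTab n) (_ : s.resSeqT e = i), Fidem K t n f γ s

/-- The block idempotent `f_γ^O = ∑_{i ∈ I^γ} f_i^O`. -/
noncomputable def fgam (K : Type*) [Field K] (t : K) (e n : ℕ) [NeZero e]
    (f : StdPair n → Hecke K t n) (γ : StdTab n → K) (g : Qtilde e n) : Hecke K t n :=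
  ∑ i ∈ Iγ e n g, fres K t e n f γ i

/-! ### Block idempotents and block ideals in the quiver Hecke algebra -/

/-- The central idempotent `e_γ = ∑_{i ∈ I^γ} e(i)` of `R_n(S_n)`. -/
noncomputable def egam (Z : Type*) [CommRing Z] (e n : ℕ) [NeZero e] (g : Qtilde e n) :
    KLR Z e n Finset.univ :=
  ∑ i ∈ (Iγ e n g).attach, Egen Z e n Finset.univ i.1 (Finset.mem_univ _)

/-- The block `R_n(A_n)_γ` of the alternating quiver Hecke algebra: the `sgn`-fixed
elements of `R_γ = e_γ R_n(S_n)`, as a submodule of `R_n(S_n)`. -/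
noncomputable def RAnGammaSub (Z : Type*) [CommRing Z] (e n : ℕ) [NeZero e]
    (sgn : KLR Z e n Finset.univ ≃ₐ[Z] KLR Z e n Finset.univ) (g : Qtilde e n) :
    Submodule Z (KLR Z e n Finset.univ) where
  carrier := {x | sgn x = x ∧ egam Z e n g * x = x ∧ x * egam Z e n g = x}
  add_mem' := by
    intro a b ha hb
    refine ⟨?_, ?_, ?_⟩
    · rw [map_add, ha.1, hb.1]
    · rw [mul_add, ha.2.1, hb.2.1]
    · rw [add_mul, ha.2.2, hb.2.2]
  zero_mem' := by
    refine ⟨?_, ?_, ?_⟩ <;> simp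
  smul_mem' := by
    intro c a ha
    refine ⟨?_, ?_, ?_⟩
    · rw [map_smul, ha.1]
    · rw [mul_smul_comm, ha.2.1]
    · rw [smul_mul_assoc, ha.2.2]


/-- The degree-zero part of a graded algebra, as a subalgebra. -/
noncomputable def gradeZeroSubalgebra {ι : Type*} [DecidableEq ι] [AddMonoid ι] {R A : Type*}
    [CommRing R] [Ring A] [Algebra R A] (𝒜 : ι → Submodule R A)
    (inst : GradedAlgebra 𝒜) : Subalgebra R A :=
  letI := inst
  (𝒜 0).toSubalgebra (SetLike.one_mem_graded 𝒜)
    (fun x y hx hy => by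
      have h : x * y ∈ 𝒜 (0 + 0) := SetLike.mul_mem_graded hx hy
      rwa [zero_add] at h)

/-- The defect of the positive root attached to a residue sequence. -/
noncomputable def defect {e n : ℕ} (i : nseq e n) : ℤ := by
  classical
  exact ((mult i).count 0 : ℤ) -
    (∑ a ∈ (mult i).toFinset, ∑ b ∈ (mult i).toFinset,
      cartan e a b * ((mult i).count a : ℤ) * ((mult i).count b : ℤ)) / 2

/-! ### The presentation of the alternating quiver Hecke algebra (Theorem B) -/

/-- Generators `Ψ_r(i)`, `Y_s(i)`, `ε(i)` of the alternating quiver Hecke algebra. -/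
inductive AltGen (e n : ℕ) (S : Finset (nseq e n)) : Type
  | P (r : ℕ) (h : r + 1 < n) (i : nseq e n) (hi : i ∈ S)
  | Y (s : ℕ) (hs : s < n) (i : nseq e n) (hi : i ∈ S)
  | E (i : nseq e n) (hi : i ∈ S)

section AltPresentation

variable (Z : Type*) [CommRing Z] (e n : ℕ) (S : Finset (nseq e n))

def aP (r : ℕ) (h : r + 1 < n) (i : nseq e n) (hi : i ∈ S) : FreeAlgebra Z (AltGen e n S) :=
  FreeAlgebra.ι Z (AltGen.P r h i hi)

def aY (s : ℕ) (hs : s < n) (i : nseq e n) (hi : i ∈ S) : FreeAlgebra Z (AltGen e n S) :=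
  FreeAlgebra.ι Z (AltGen.Y s hs i hi)

def aE (i : nseq e n) (hi : i ∈ S) : FreeAlgebra Z (AltGen e n S) :=
  FreeAlgebra.ι Z (AltGen.E i hi)

/-- The defining relations of the alternating quiver Hecke algebra (Theorem B). -/
inductive AltRel [Invertible (2 : Z)] :
    FreeAlgebra Z (AltGen e n S) → FreeAlgebra Z (AltGen e n S) → Prop
  | cyc (i : nseq e n) (hi : i ∈ S) (h0 : 0 < n) :
      AltRel (if i ⟨0, h0⟩ = 0 then aY Z e n S 0 h0 i hi else aE Z e n S i hi) 0
  | idem_mul (i j : nseq e n) (hi : i ∈ S) (hj : j ∈ S) :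
      AltRel (aE Z e n S i hi * aE Z e n S j hj)
        (if j = i ∨ j = -i then aE Z e n S i hi else 0)
  | idem_sum : AltRel (∑ i ∈ S.attach, (⅟(2 : Z)) • aE Z e n S i.1 i.2) 1
  | y_neg (s : ℕ) (hs : s < n) (i : nseq e n) (hi : i ∈ S) (hni : -i ∈ S) :
      AltRel (aY Z e n S s hs (-i) hni) (- aY Z e n S s hs i hi)
  | psi_neg (r : ℕ) (h : r + 1 < n) (i : nseq e n) (hi : i ∈ S) (hni : -i ∈ S) :
      AltRel (aP Z e n S r h (-i) hni) (- aP Z e n S r h i hi)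
  | eps_neg (i : nseq e n) (hi : i ∈ S) (hni : -i ∈ S) :
      AltRel (aE Z e n S (-i) hni) (aE Z e n S i hi)
  | eYe (s : ℕ) (hs : s < n) (i j k : nseq e n) (hi : i ∈ S) (hj : j ∈ S) (hk : k ∈ S) :
      AltRel (aE Z e n S i hi * aY Z e n S s hs j hj * aE Z e n S k hk)
        (if i = j ∧ j = k then aY Z e n S s hs j hj else 0)
  | ePe (r : ℕ) (h : r + 1 < n) (i j k : nseq e n) (hi : i ∈ S) (hj : j ∈ S) (hk : k ∈ S) :
      AltRel (aE Z e n S i hi * aP Z e n S r h j hj * aE Z e n S k hk)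
        (if swapSeq r h i = j ∧ j = k then aP Z e n S r h j hj else 0)
  | yy (r : ℕ) (hr : r < n) (s : ℕ) (hs : s < n) (i j : nseq e n) (hi : i ∈ S) (hj : j ∈ S) :
      AltRel (aY Z e n S r hr i hi * aY Z e n S s hs j hj)
        (if i = j then aY Z e n S s hs i hi * aY Z e n S r hr j hj else 0)
  | psi_y_succ (r : ℕ) (h : r + 1 < n) (i : nseq e n) (hi : i ∈ S) (hsi : swapSeq r h i ∈ S) :
      AltRel (aP Z e n S r h i hi * aY Z e n S (r + 1) h i hi)
        (aY Z e n S r (Nat.lt_of_succ_lt h) (swapSeq r h i) hsi * aP Z e n S r h i hi +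
          if i ⟨r, Nat.lt_of_succ_lt h⟩ = i ⟨r + 1, h⟩ then aE Z e n S i hi else 0)
  | y_succ_psi (r : ℕ) (h : r + 1 < n) (i : nseq e n) (hi : i ∈ S) (hsi : swapSeq r h i ∈ S) :
      AltRel (aY Z e n S (r + 1) h (swapSeq r h i) hsi * aP Z e n S r h i hi)
        (aP Z e n S r h i hi * aY Z e n S r (Nat.lt_of_succ_lt h) i hi +
          if i ⟨r, Nat.lt_of_succ_lt h⟩ = i ⟨r + 1, h⟩ then aE Z e n S i hi else 0)
  | psi_y_far (r : ℕ) (h : r + 1 < n) (s : ℕ) (hs : s < n) (hfar : s ≠ r ∧ s ≠ r + 1)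
      (i : nseq e n) (hi : i ∈ S) (hsi : swapSeq r h i ∈ S) :
      AltRel (aP Z e n S r h i hi * aY Z e n S s hs i hi)
        (aY Z e n S s hs (swapSeq r h i) hsi * aP Z e n S r h i hi)
  | psi_psi_far (r : ℕ) (h : r + 1 < n) (u : ℕ) (hu : u + 1 < n)
      (hfar : r + 1 < u ∨ u + 1 < r) (i : nseq e n) (hi : i ∈ S)
      (h1 : swapSeq u hu i ∈ S) (h2 : swapSeq r h i ∈ S) :
      AltRel (aP Z e n S r h (swapSeq u hu i) h1 * aP Z e n S u hu i hi)
        (aP Z e n S u hu (swapSeq r h i) h2 * aP Z e n S r h i hi)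
  | quad (r : ℕ) (h : r + 1 < n) (i : nseq e n) (hi : i ∈ S) (hsi : swapSeq r h i ∈ S) :
      AltRel (aP Z e n S r h (swapSeq r h i) hsi * aP Z e n S r h i hi)
        (if i ⟨r, Nat.lt_of_succ_lt h⟩ = i ⟨r + 1, h⟩ then 0
         else if i ⟨r + 1, h⟩ = i ⟨r, Nat.lt_of_succ_lt h⟩ + 1 then
          aY Z e n S r (Nat.lt_of_succ_lt h) i hi - aY Z e n S (r + 1) h i hi
         else if i ⟨r, Nat.lt_of_succ_lt h⟩ = i ⟨r + 1, h⟩ + 1 then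
          aY Z e n S (r + 1) h i hi - aY Z e n S r (Nat.lt_of_succ_lt h) i hi
         else aE Z e n S i hi)
  | braid (r : ℕ) (h2 : r + 2 < n) (i : nseq e n) (hi : i ∈ S)
      (hA : swapSeq (r + 1) h2 (swapSeq r (Nat.lt_of_succ_lt h2) i) ∈ S)
      (hB : swapSeq r (Nat.lt_of_succ_lt h2) i ∈ S)
      (hC : swapSeq r (Nat.lt_of_succ_lt h2) (swapSeq (r + 1) h2 i) ∈ S)
      (hD : swapSeq (r + 1) h2 i ∈ S) :
      AltRel
        (aP Z e n S r (Nat.lt_of_succ_lt h2)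
            (swapSeq (r + 1) h2 (swapSeq r (Nat.lt_of_succ_lt h2) i)) hA *
          aP Z e n S (r + 1) h2 (swapSeq r (Nat.lt_of_succ_lt h2) i) hB *
          aP Z e n S r (Nat.lt_of_succ_lt h2) i hi -
         aP Z e n S (r + 1) h2
            (swapSeq r (Nat.lt_of_succ_lt h2) (swapSeq (r + 1) h2 i)) hC *
          aP Z e n S r (Nat.lt_of_succ_lt h2) (swapSeq (r + 1) h2 i) hD *
          aP Z e n S (r + 1) h2 i hi)
        (if i ⟨r, by omega⟩ = i ⟨r + 2, h2⟩ ∧ i ⟨r, by omega⟩ = i ⟨r + 1, by omega⟩ + 1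
          then aE Z e n S i hi
         else if i ⟨r, by omega⟩ = i ⟨r + 2, h2⟩ ∧ i ⟨r + 1, by omega⟩ = i ⟨r, by omega⟩ + 1
          then - aE Z e n S i hi
         else 0)

/-- The algebra with the presentation of Theorem B (the block `R_n(A_n)_γ` for `S = I^γ`). -/
abbrev AltKLR [Invertible (2 : Z)] := RingQuot (AltRel Z e n S)

noncomputable def AltΨ [Invertible (2 : Z)] (r : ℕ) (h : r + 1 < n) (i : nseq e n)
    (hi : i ∈ S) : AltKLR Z e n S :=
  RingQuot.mkAlgHom Z (AltRel Z e n S) (aP Z e n S r h i hi)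

noncomputable def AltY [Invertible (2 : Z)] (s : ℕ) (hs : s < n) (i : nseq e n)
    (hi : i ∈ S) : AltKLR Z e n S :=
  RingQuot.mkAlgHom Z (AltRel Z e n S) (aY Z e n S s hs i hi)

noncomputable def AltE [Invertible (2 : Z)] (i : nseq e n) (hi : i ∈ S) : AltKLR Z e n S :=
  RingQuot.mkAlgHom Z (AltRel Z e n S) (aE Z e n S i hi)

/-- The grading of the alternating quiver Hecke algebra:
`deg ε(i) = 0`, `deg Y_r(i) = 2`, `deg Ψ_r(i) = -(α_{i_r}, α_{i_{r+1}})`. -/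
def AltGradingSpec [Invertible (2 : Z)] (𝒜 : ℤ → Submodule Z (AltKLR Z e n S)) : Prop :=
  (∀ (i : nseq e n) (hi : i ∈ S), AltE Z e n S i hi ∈ 𝒜 0) ∧
  (∀ (s : ℕ) (hs : s < n) (i : nseq e n) (hi : i ∈ S), AltY Z e n S s hs i hi ∈ 𝒜 2) ∧
  (∀ (r : ℕ) (h : r + 1 < n) (i : nseq e n) (hi : i ∈ S),
    AltΨ Z e n S r h i hi ∈ 𝒜 (- cartan e (i ⟨r, Nat.lt_of_succ_lt h⟩) (i ⟨r + 1, h⟩)))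

end AltPresentation

/-! ### The `(ℤ/2 × ℤ)`-graded presentation `R'_γ` (Definition 1.9) -/

/-- Generators `ψ_r`, `y_s`, `ε_a(i)` of `R'_γ`. -/
inductive SupGen (e n : ℕ) (S : Finset (nseq e n)) : Type
  | psi (r : ℕ) (h : r + 1 < n)
  | y (s : ℕ) (hs : s < n)
  | eps (a : ZMod 2) (i : nseq e n) (hi : i ∈ S)

section SupPresentation

variable (Z : Type*) [CommRing Z] (e n : ℕ) (S : Finset (nseq e n))

def sψ (r : ℕ) (h : r + 1 < n) : FreeAlgebra Z (SupGen e n S) :=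
  FreeAlgebra.ι Z (SupGen.psi r h)

def sy (s : ℕ) (hs : s < n) : FreeAlgebra Z (SupGen e n S) :=
  FreeAlgebra.ι Z (SupGen.y s hs)

def sε (a : ZMod 2) (i : nseq e n) (hi : i ∈ S) : FreeAlgebra Z (SupGen e n S) :=
  FreeAlgebra.ι Z (SupGen.eps a i hi)

/-- The defining relations of `R'_γ` (Definition 1.9 of the paper). -/
inductive SupRel [Invertible (2 : Z)] :
    FreeAlgebra Z (SupGen e n S) → FreeAlgebra Z (SupGen e n S) → Prop
  | cyc (i : nseq e n) (hi : i ∈ S) (h0 : 0 < n) :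
      SupRel ((sy Z e n S 0 h0) ^ (if i ⟨0, h0⟩ = 0 then 1 else 0) * sε Z e n S 0 i hi) 0
  | eps_sum : SupRel (∑ i ∈ S.attach, (⅟(2 : Z)) • sε Z e n S 0 i.1 i.2) 1
  | eps0_mul (i j : nseq e n) (hi : i ∈ S) (hj : j ∈ S) :
      SupRel (sε Z e n S 0 i hi * sε Z e n S 0 j hj)
        (if j = i ∨ j = -i then sε Z e n S 0 i hi else 0)
  | eps_add (a b : ZMod 2) (i : nseq e n) (hi : i ∈ S) :
      SupRel (sε Z e n S a i hi * sε Z e n S b i hi) (sε Z e n S (a + b) i hi)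
  | eps_neg (a : ZMod 2) (i : nseq e n) (hi : i ∈ S) (hni : -i ∈ S) :
      SupRel (sε Z e n S a i hi)
        (if a = 0 then sε Z e n S a (-i) hni else - sε Z e n S a (-i) hni)
  | psi_eps (r : ℕ) (h : r + 1 < n) (a : ZMod 2) (i : nseq e n) (hi : i ∈ S)
      (hsi : swapSeq r h i ∈ S) :
      SupRel (sψ Z e n S r h * sε Z e n S a i hi)
        (sε Z e n S a (swapSeq r h i) hsi * sψ Z e n S r h)
  | y_eps (s : ℕ) (hs : s < n) (a : ZMod 2) (i : nseq e n) (hi : i ∈ S) :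
      SupRel (sy Z e n S s hs * sε Z e n S a i hi) (sε Z e n S a i hi * sy Z e n S s hs)
  | yy (r : ℕ) (hr : r < n) (s : ℕ) (hs : s < n) (i : nseq e n) (hi : i ∈ S) :
      SupRel (sy Z e n S r hr * sy Z e n S s hs * sε Z e n S 1 i hi)
        (sy Z e n S s hs * sy Z e n S r hr * sε Z e n S 1 i hi)
  | psi_y_succ (r : ℕ) (h : r + 1 < n) (i : nseq e n) (hi : i ∈ S) :
      SupRel (sψ Z e n S r h * sy Z e n S (r + 1) h * sε Z e n S 1 i hi)
        ((sy Z e n S r (Nat.lt_of_succ_lt h) * sψ Z e n S r h +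
          if i ⟨r, Nat.lt_of_succ_lt h⟩ = i ⟨r + 1, h⟩ then 1 else 0) * sε Z e n S 1 i hi)
  | y_succ_psi (r : ℕ) (h : r + 1 < n) (i : nseq e n) (hi : i ∈ S) :
      SupRel (sy Z e n S (r + 1) h * sψ Z e n S r h * sε Z e n S 1 i hi)
        ((sψ Z e n S r h * sy Z e n S r (Nat.lt_of_succ_lt h) +
          if i ⟨r, Nat.lt_of_succ_lt h⟩ = i ⟨r + 1, h⟩ then 1 else 0) * sε Z e n S 1 i hi)
  | psi_y_far (r : ℕ) (h : r + 1 < n) (s : ℕ) (hs : s < n) (hfar : s ≠ r ∧ s ≠ r + 1)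
      (i : nseq e n) (hi : i ∈ S) :
      SupRel (sψ Z e n S r h * sy Z e n S s hs * sε Z e n S 1 i hi)
        (sy Z e n S s hs * sψ Z e n S r h * sε Z e n S 1 i hi)
  | psi_psi_far (r : ℕ) (h : r + 1 < n) (u : ℕ) (hu : u + 1 < n)
      (hfar : r + 1 < u ∨ u + 1 < r) (i : nseq e n) (hi : i ∈ S) :
      SupRel (sψ Z e n S r h * sψ Z e n S u hu * sε Z e n S 1 i hi)
        (sψ Z e n S u hu * sψ Z e n S r h * sε Z e n S 1 i hi)
  | quad (r : ℕ) (h : r + 1 < n) (i : nseq e n) (hi : i ∈ S) :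
      SupRel (sψ Z e n S r h ^ 2 * sε Z e n S 1 i hi)
        (if i ⟨r, Nat.lt_of_succ_lt h⟩ = i ⟨r + 1, h⟩ then 0
         else if i ⟨r + 1, h⟩ = i ⟨r, Nat.lt_of_succ_lt h⟩ + 1 then
          (sy Z e n S r (Nat.lt_of_succ_lt h) - sy Z e n S (r + 1) h) * sε Z e n S 0 i hi
         else if i ⟨r, Nat.lt_of_succ_lt h⟩ = i ⟨r + 1, h⟩ + 1 then
          (sy Z e n S (r + 1) h - sy Z e n S r (Nat.lt_of_succ_lt h)) * sε Z e n S 0 i hi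
         else sε Z e n S 1 i hi)
  | braid (r : ℕ) (h2 : r + 2 < n) (i : nseq e n) (hi : i ∈ S) :
      SupRel
        (sψ Z e n S r (Nat.lt_of_succ_lt h2) * sψ Z e n S (r + 1) h2 *
          sψ Z e n S r (Nat.lt_of_succ_lt h2) * sε Z e n S 0 i hi)
        (sψ Z e n S (r + 1) h2 * sψ Z e n S r (Nat.lt_of_succ_lt h2) *
          sψ Z e n S (r + 1) h2 * sε Z e n S 0 i hi +
          (if i ⟨r, by omega⟩ = i ⟨r + 2, h2⟩ ∧ i ⟨r + 1, by omega⟩ = i ⟨r, by omega⟩ + 1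
            then - sε Z e n S 1 i hi
           else if i ⟨r, by omega⟩ = i ⟨r + 2, h2⟩ ∧ i ⟨r, by omega⟩ = i ⟨r + 1, by omega⟩ + 1
            then sε Z e n S 1 i hi
           else 0))

/-- The `(ℤ/2 × ℤ)`-graded algebra `R'_γ` of Definition 1.9 (for `S = I^γ`). -/
abbrev SupKLR [Invertible (2 : Z)] := RingQuot (SupRel Z e n S)

noncomputable def SupΨ [Invertible (2 : Z)] (r : ℕ) (h : r + 1 < n) : SupKLR Z e n S :=
  RingQuot.mkAlgHom Z (SupRel Z e n S) (sψ Z e n S r h)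

noncomputable def SupY [Invertible (2 : Z)] (s : ℕ) (hs : s < n) : SupKLR Z e n S :=
  RingQuot.mkAlgHom Z (SupRel Z e n S) (sy Z e n S s hs)

noncomputable def SupE [Invertible (2 : Z)] (a : ZMod 2) (i : nseq e n) (hi : i ∈ S) :
    SupKLR Z e n S :=
  RingQuot.mkAlgHom Z (SupRel Z e n S) (sε Z e n S a i hi)

/-- The `(ℤ/2 × ℤ)`-grading of `R'_γ`: `Deg ψ_r ε_0(i) = (1, -c_{i_r,i_{r+1}})`,
`Deg y_s = (1, 2)`, `Deg ε_a(i) = (a, 0)`. -/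
def SupSuperGradingSpec [Invertible (2 : Z)]
    (𝒜 : ZMod 2 × ℤ → Submodule Z (SupKLR Z e n S)) : Prop :=
  (∀ (s : ℕ) (hs : s < n), SupY Z e n S s hs ∈ 𝒜 (1, 2)) ∧
  (∀ (a : ZMod 2) (i : nseq e n) (hi : i ∈ S), SupE Z e n S a i hi ∈ 𝒜 (a, 0)) ∧
  (∀ (r : ℕ) (h : r + 1 < n) (i : nseq e n) (hi : i ∈ S),
    SupΨ Z e n S r h * SupE Z e n S 0 i hi ∈
      𝒜 (1, - cartan e (i ⟨r, Nat.lt_of_succ_lt h⟩) (i ⟨r + 1, h⟩)))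

/-- The `ℤ`-grading of `R'_γ` obtained by forgetting the `ℤ/2`-grading. -/
def SupZGradingSpec [Invertible (2 : Z)] (𝒜 : ℤ → Submodule Z (SupKLR Z e n S)) : Prop :=
  (∀ (s : ℕ) (hs : s < n), SupY Z e n S s hs ∈ 𝒜 2) ∧
  (∀ (a : ZMod 2) (i : nseq e n) (hi : i ∈ S), SupE Z e n S a i hi ∈ 𝒜 0) ∧
  (∀ (r : ℕ) (h : r + 1 < n) (i : nseq e n) (hi : i ∈ S),
    SupΨ Z e n S r h * SupE Z e n S 0 i hi ∈
      𝒜 (- cartan e (i ⟨r, Nat.lt_of_succ_lt h⟩) (i ⟨r + 1, h⟩)))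

end SupPresentation

/-! ### The deformed KLR presentation `R^O_γ` over an idempotent subring (Definition 2.29) -/

/-- Quantum integers over a commutative ring, for an invertible parameter. -/
def qintu {O : Type*} [CommRing O] (tu : Oˣ) (k : ℤ) : O :=
  if 0 ≤ k then ∑ j ∈ Finset.range k.toNat, ((tu : O)) ^ j
  else -∑ j ∈ Finset.range (-k).toNat, (((tu⁻¹ : Oˣ) : O)) ^ (j + 1)

/-- `i ∈ I^n_+`. -/
def IsPlusSeq {e n : ℕ} (i : nseq e n) : Prop :=
  ∃ (h0 : 0 < n) (h1 : 1 < n), i ⟨0, h0⟩ = 0 ∧ i ⟨1, h1⟩ = 1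

/-- `i ∈ I^n_-`. -/
def IsMinusSeq {e n : ℕ} (i : nseq e n) : Prop :=
  ∃ (h0 : 0 < n) (h1 : 1 < n), i ⟨0, h0⟩ = 0 ∧ i ⟨1, h1⟩ = -1

/-- `ρ_r(i) = î_r - î_{r+1}`, using the canonical lifts `î ∈ [0, e)`. -/
def rhoInt {e n : ℕ} [NeZero e] (i : nseq e n) (r : ℕ) (h : r + 1 < n) : ℤ :=
  ((i ⟨r, Nat.lt_of_succ_lt h⟩).val : ℤ) - ((i ⟨r + 1, h⟩).val : ℤ)

section DROPresentation

variable (O : Type*) [CommRing O] (tu : Oˣ) (e n : ℕ) [NeZero e] (S : Finset (nseq e n))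

/-- `⟨d⟩_r = t^d y_r - [d]` (the `I^γ_+` version). -/
noncomputable def dyoP (d : ℤ) (r : ℕ) (hr : r < n) : FreeAlgebra O (KLRGen e n S) :=
  (((tu ^ d : Oˣ) : O)) • fy O e n S r hr - algebraMap O _ (qintu tu d)

/-- `⟨d⟩_r = t^d y_r + [d]` (the `I^γ_-` version). -/
noncomputable def dyoM (d : ℤ) (r : ℕ) (hr : r < n) : FreeAlgebra O (KLRGen e n S) :=
  (((tu ^ d : Oˣ) : O)) • fy O e n S r hr + algebraMap O _ (qintu tu d)

/-- The relations of the deformed KLR presentation `R^O_γ` of Definition 2.29 of the paper. -/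
inductive DRORel : FreeAlgebra O (KLRGen e n S) → FreeAlgebra O (KLRGen e n S) → Prop
  | cyc (i : nseq e n) (hi : i ∈ S) (h0 : 0 < n) :
      DRORel ((fy O e n S 0 h0) ^ (if i ⟨0, h0⟩ = 0 then 1 else 0) * fe O e n S i hi) 0
  | idem_mul (i j : nseq e n) (hi : i ∈ S) (hj : j ∈ S) :
      DRORel (fe O e n S i hi * fe O e n S j hj) (if i = j then fe O e n S i hi else 0)
  | idem_sum : DRORel (∑ i ∈ S.attach, fe O e n S i.1 i.2) 1
  | y_idem (s : ℕ) (hs : s < n) (i : nseq e n) (hi : i ∈ S) :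
      DRORel (fy O e n S s hs * fe O e n S i hi) (fe O e n S i hi * fy O e n S s hs)
  | psi_idem (r : ℕ) (h : r + 1 < n) (i : nseq e n) (hi : i ∈ S) (hsi : swapSeq r h i ∈ S) :
      DRORel (fψ O e n S r h * fe O e n S i hi)
        (fe O e n S (swapSeq r h i) hsi * fψ O e n S r h)
  | yy (s : ℕ) (hs : s < n) (u : ℕ) (hu : u < n) :
      DRORel (fy O e n S s hs * fy O e n S u hu) (fy O e n S u hu * fy O e n S s hs)
  | psi_y_far (r : ℕ) (h : r + 1 < n) (s : ℕ) (hs : s < n) (hfar : s ≠ r ∧ s ≠ r + 1) :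
      DRORel (fψ O e n S r h * fy O e n S s hs) (fy O e n S s hs * fψ O e n S r h)
  | psi_psi_far (r : ℕ) (h : r + 1 < n) (s : ℕ) (hs : s + 1 < n)
      (hfar : r + 1 < s ∨ s + 1 < r) :
      DRORel (fψ O e n S r h * fψ O e n S s hs) (fψ O e n S s hs * fψ O e n S r h)
  -- `ψ_1 y_2 e(i) = (y_1 ψ_1 + δ_{i_1 i_2}) e(i)` and its mirror (paper index `r = 1`)
  | psi_y_one (h : 1 < n) (i : nseq e n) (hi : i ∈ S) :
      DRORel (fψ O e n S 0 h * fy O e n S 1 h * fe O e n S i hi)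
        ((fy O e n S 0 (by omega) * fψ O e n S 0 h +
          if i ⟨0, by omega⟩ = i ⟨1, h⟩ then 1 else 0) * fe O e n S i hi)
  | y_one_psi (h : 1 < n) (i : nseq e n) (hi : i ∈ S) :
      DRORel (fy O e n S 1 h * fψ O e n S 0 h * fe O e n S i hi)
        ((fψ O e n S 0 h * fy O e n S 0 (by omega) +
          if i ⟨0, by omega⟩ = i ⟨1, h⟩ then 1 else 0) * fe O e n S i hi)
  -- `ψ_2 y_3 e(i) = (⟨-e⟩_2 ψ_2 + δ_{i_2 i_3}) e(i)` and its mirror (paper index `r = 2`)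
  | psi_y_two_plus (h : 2 < n) (i : nseq e n) (hi : i ∈ S) (hp : IsPlusSeq i) :
      DRORel (fψ O e n S 1 h * fy O e n S 2 h * fe O e n S i hi)
        ((dyoP O tu e n S (-(e : ℤ)) 1 (by omega) * fψ O e n S 1 h +
          if i ⟨1, by omega⟩ = i ⟨2, h⟩ then 1 else 0) * fe O e n S i hi)
  | psi_y_two_minus (h : 2 < n) (i : nseq e n) (hi : i ∈ S) (hm : IsMinusSeq i) :
      DRORel (fψ O e n S 1 h * fy O e n S 2 h * fe O e n S i hi)
        ((dyoM O tu e n S (-(e : ℤ)) 1 (by omega) * fψ O e n S 1 h +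
          if i ⟨1, by omega⟩ = i ⟨2, h⟩ then 1 else 0) * fe O e n S i hi)
  | y_two_psi_plus (h : 2 < n) (i : nseq e n) (hi : i ∈ S) (hp : IsPlusSeq i) :
      DRORel (fy O e n S 2 h * fψ O e n S 1 h * fe O e n S i hi)
        ((fψ O e n S 1 h * dyoP O tu e n S (-(e : ℤ)) 1 (by omega) +
          if i ⟨1, by omega⟩ = i ⟨2, h⟩ then 1 else 0) * fe O e n S i hi)
  | y_two_psi_minus (h : 2 < n) (i : nseq e n) (hi : i ∈ S) (hm : IsMinusSeq i) :
      DRORel (fy O e n S 2 h * fψ O e n S 1 h * fe O e n S i hi)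
        ((fψ O e n S 1 h * dyoM O tu e n S (-(e : ℤ)) 1 (by omega) +
          if i ⟨1, by omega⟩ = i ⟨2, h⟩ then 1 else 0) * fe O e n S i hi)
  -- standard commutation for `2 < r < n` (0-indexed: `2 ≤ r`)
  | psi_y_succ_high (r : ℕ) (h : r + 1 < n) (hr : 2 ≤ r) (i : nseq e n) (hi : i ∈ S) :
      DRORel (fψ O e n S r h * fy O e n S (r + 1) h * fe O e n S i hi)
        ((fy O e n S r (Nat.lt_of_succ_lt h) * fψ O e n S r h +
          if i ⟨r, Nat.lt_of_succ_lt h⟩ = i ⟨r + 1, h⟩ then 1 else 0) * fe O e n S i hi)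
  | y_succ_psi_high (r : ℕ) (h : r + 1 < n) (hr : 2 ≤ r) (i : nseq e n) (hi : i ∈ S) :
      DRORel (fy O e n S (r + 1) h * fψ O e n S r h * fe O e n S i hi)
        ((fψ O e n S r h * fy O e n S r (Nat.lt_of_succ_lt h) +
          if i ⟨r, Nat.lt_of_succ_lt h⟩ = i ⟨r + 1, h⟩ then 1 else 0) * fe O e n S i hi)
  -- undeformed quadratic relations for `r = 1, 2` (0-indexed `r < 2`)
  | quad_low (r : ℕ) (h : r + 1 < n) (hr : r < 2) (i : nseq e n) (hi : i ∈ S) :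
      DRORel (fψ O e n S r h ^ 2 * fe O e n S i hi)
        (if i ⟨r, Nat.lt_of_succ_lt h⟩ = i ⟨r + 1, h⟩ then 0
         else if i ⟨r + 1, h⟩ = i ⟨r, Nat.lt_of_succ_lt h⟩ + 1 then
          (fy O e n S r (Nat.lt_of_succ_lt h) - fy O e n S (r + 1) h) * fe O e n S i hi
         else if i ⟨r, Nat.lt_of_succ_lt h⟩ = i ⟨r + 1, h⟩ + 1 then
          (fy O e n S (r + 1) h - fy O e n S r (Nat.lt_of_succ_lt h)) * fe O e n S i hi
         else fe O e n S i hi)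
  -- deformed quadratic relations for `2 < r` (0-indexed `2 ≤ r`)
  | quad_eq (r : ℕ) (h : r + 1 < n) (hr : 2 ≤ r) (i : nseq e n) (hi : i ∈ S)
      (heq : i ⟨r, Nat.lt_of_succ_lt h⟩ = i ⟨r + 1, h⟩) :
      DRORel (fψ O e n S r h ^ 2 * fe O e n S i hi) 0
  | quad_plus_arrow (r : ℕ) (h : r + 1 < n) (hr : 2 ≤ r) (i : nseq e n) (hi : i ∈ S)
      (hp : IsPlusSeq i) (ha : i ⟨r + 1, h⟩ = i ⟨r, Nat.lt_of_succ_lt h⟩ + 1) :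
      DRORel (fψ O e n S r h ^ 2 * fe O e n S i hi)
        ((dyoP O tu e n S (1 + rhoInt i r h) r (Nat.lt_of_succ_lt h) -
          fy O e n S (r + 1) h) * fe O e n S i hi)
  | quad_minus_left (r : ℕ) (h : r + 1 < n) (hr : 2 ≤ r) (i : nseq e n) (hi : i ∈ S)
      (hm : IsMinusSeq i) (hl : i ⟨r, Nat.lt_of_succ_lt h⟩ = i ⟨r + 1, h⟩ + 1) :
      DRORel (fψ O e n S r h ^ 2 * fe O e n S i hi)
        ((fy O e n S (r + 1) h -
          dyoM O tu e n S (1 - rhoInt i r h) r (Nat.lt_of_succ_lt h)) * fe O e n S i hi)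
  | quad_plus_left (r : ℕ) (h : r + 1 < n) (hr : 2 ≤ r) (i : nseq e n) (hi : i ∈ S)
      (hp : IsPlusSeq i) (hl : i ⟨r, Nat.lt_of_succ_lt h⟩ = i ⟨r + 1, h⟩ + 1) :
      DRORel (fψ O e n S r h ^ 2 * fe O e n S i hi)
        ((dyoP O tu e n S (1 - rhoInt i r h) (r + 1) h - fy O e n S r (Nat.lt_of_succ_lt h)) *
          fe O e n S i hi)
  | quad_minus_arrow (r : ℕ) (h : r + 1 < n) (hr : 2 ≤ r) (i : nseq e n) (hi : i ∈ S)
      (hm : IsMinusSeq i) (ha : i ⟨r + 1, h⟩ = i ⟨r, Nat.lt_of_succ_lt h⟩ + 1) :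
      DRORel (fψ O e n S r h ^ 2 * fe O e n S i hi)
        ((fy O e n S r (Nat.lt_of_succ_lt h) - dyoM O tu e n S (1 + rhoInt i r h) (r + 1) h) *
          fe O e n S i hi)
  | quad_other (r : ℕ) (h : r + 1 < n) (hr : 2 ≤ r) (i : nseq e n) (hi : i ∈ S)
      (h1 : i ⟨r, Nat.lt_of_succ_lt h⟩ ≠ i ⟨r + 1, h⟩)
      (h2 : i ⟨r + 1, h⟩ ≠ i ⟨r, Nat.lt_of_succ_lt h⟩ + 1)
      (h3 : i ⟨r, Nat.lt_of_succ_lt h⟩ ≠ i ⟨r + 1, h⟩ + 1) :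
      DRORel (fψ O e n S r h ^ 2 * fe O e n S i hi) (fe O e n S i hi)
  -- undeformed braid relations for `r = 1, 2` (0-indexed `r < 2`)
  | braid_low (r : ℕ) (h2 : r + 2 < n) (hr : r < 2) (i : nseq e n) (hi : i ∈ S) :
      DRORel
        (fψ O e n S r (Nat.lt_of_succ_lt h2) * fψ O e n S (r + 1) h2 *
          fψ O e n S r (Nat.lt_of_succ_lt h2) * fe O e n S i hi)
        (fψ O e n S (r + 1) h2 * fψ O e n S r (Nat.lt_of_succ_lt h2) *
          fψ O e n S (r + 1) h2 * fe O e n S i hi +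
          (if i ⟨r, by omega⟩ = i ⟨r + 2, h2⟩ ∧ i ⟨r + 1, by omega⟩ = i ⟨r, by omega⟩ + 1
            then -1
           else if i ⟨r, by omega⟩ = i ⟨r + 2, h2⟩ ∧ i ⟨r, by omega⟩ = i ⟨r + 1, by omega⟩ + 1
            then 1
           else 0) * fe O e n S i hi)
  -- deformed braid relations for `2 < r` (0-indexed `2 ≤ r`)
  | braid_plus_arrow (r : ℕ) (h2 : r + 2 < n) (hr : 2 ≤ r) (i : nseq e n) (hi : i ∈ S)
      (hp : IsPlusSeq i) (hres : i ⟨r, by omega⟩ = i ⟨r + 2, h2⟩)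
      (ha : i ⟨r + 1, by omega⟩ = i ⟨r, by omega⟩ + 1) :
      DRORel
        (fψ O e n S r (Nat.lt_of_succ_lt h2) * fψ O e n S (r + 1) h2 *
          fψ O e n S r (Nat.lt_of_succ_lt h2) * fe O e n S i hi)
        ((fψ O e n S (r + 1) h2 * fψ O e n S r (Nat.lt_of_succ_lt h2) *
          fψ O e n S (r + 1) h2 -
          algebraMap O _ (((tu ^ (1 + rhoInt i r (Nat.lt_of_succ_lt h2)) : Oˣ) : O))) *
          fe O e n S i hi)
  | braid_minus_left (r : ℕ) (h2 : r + 2 < n) (hr : 2 ≤ r) (i : nseq e n) (hi : i ∈ S)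
      (hm : IsMinusSeq i) (hres : i ⟨r, by omega⟩ = i ⟨r + 2, h2⟩)
      (hl : i ⟨r, by omega⟩ = i ⟨r + 1, by omega⟩ + 1) :
      DRORel
        (fψ O e n S r (Nat.lt_of_succ_lt h2) * fψ O e n S (r + 1) h2 *
          fψ O e n S r (Nat.lt_of_succ_lt h2) * fe O e n S i hi)
        ((fψ O e n S (r + 1) h2 * fψ O e n S r (Nat.lt_of_succ_lt h2) *
          fψ O e n S (r + 1) h2 +
          algebraMap O _ (((tu ^ (1 - rhoInt i r (Nat.lt_of_succ_lt h2)) : Oˣ) : O))) *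
          fe O e n S i hi)
  | braid_minus_arrow (r : ℕ) (h2 : r + 2 < n) (hr : 2 ≤ r) (i : nseq e n) (hi : i ∈ S)
      (hm : IsMinusSeq i) (hres : i ⟨r, by omega⟩ = i ⟨r + 2, h2⟩)
      (ha : i ⟨r + 1, by omega⟩ = i ⟨r, by omega⟩ + 1) :
      DRORel
        (fψ O e n S r (Nat.lt_of_succ_lt h2) * fψ O e n S (r + 1) h2 *
          fψ O e n S r (Nat.lt_of_succ_lt h2) * fe O e n S i hi)
        ((fψ O e n S (r + 1) h2 * fψ O e n S r (Nat.lt_of_succ_lt h2) *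
          fψ O e n S (r + 1) h2 - 1) * fe O e n S i hi)
  | braid_plus_left (r : ℕ) (h2 : r + 2 < n) (hr : 2 ≤ r) (i : nseq e n) (hi : i ∈ S)
      (hp : IsPlusSeq i) (hres : i ⟨r, by omega⟩ = i ⟨r + 2, h2⟩)
      (hl : i ⟨r, by omega⟩ = i ⟨r + 1, by omega⟩ + 1) :
      DRORel
        (fψ O e n S r (Nat.lt_of_succ_lt h2) * fψ O e n S (r + 1) h2 *
          fψ O e n S r (Nat.lt_of_succ_lt h2) * fe O e n S i hi)
        ((fψ O e n S (r + 1) h2 * fψ O e n S r (Nat.lt_of_succ_lt h2) *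
          fψ O e n S (r + 1) h2 + 1) * fe O e n S i hi)
  | braid_other (r : ℕ) (h2 : r + 2 < n) (hr : 2 ≤ r) (i : nseq e n) (hi : i ∈ S)
      (hno : ¬(i ⟨r, by omega⟩ = i ⟨r + 2, h2⟩ ∧
        (i ⟨r + 1, by omega⟩ = i ⟨r, by omega⟩ + 1 ∨
         i ⟨r, by omega⟩ = i ⟨r + 1, by omega⟩ + 1))) :
      DRORel
        (fψ O e n S r (Nat.lt_of_succ_lt h2) * fψ O e n S (r + 1) h2 *
          fψ O e n S r (Nat.lt_of_succ_lt h2) * fe O e n S i hi)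
        (fψ O e n S (r + 1) h2 * fψ O e n S r (Nat.lt_of_succ_lt h2) *
          fψ O e n S (r + 1) h2 * fe O e n S i hi)

/-- The deformed quiver Hecke algebra `R^O_γ` over `O` (Definition 2.29). -/
abbrev DRO := RingQuot (DRORel O tu e n S)

end DROPresentation

/-! ### Graded cellular basis data (Hu–Mathas `ψ`-basis) -/

/-- The entry of the initial tableau `t^λ` (rows filled left to right, top to bottom). -/
def initEntry (μ : YoungDiagram) (c : ℕ × ℕ) : ℕ :=
  c.2 + 1 + ∑ r ∈ Finset.range c.1, μ.rowLen r

/-- The cell of the initial tableau `t^λ` containing `m`. -/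
noncomputable def initCell (μ : YoungDiagram) (m : ℕ) : ℕ × ℕ :=
  Function.invFunOn (initEntry μ) ↑μ.cells m

/-- `i^λ = res(t^λ)`, the residue sequence of the initial tableau. -/
noncomputable def initResSeq (e n : ℕ) (μ : YoungDiagram) : nseq e n :=
  fun k => ((initCell μ (k.1 + 1)).2 : ZMod e) - ((initCell μ (k.1 + 1)).1 : ZMod e)

/-- The permutation of `ℕ` determined by a word in the simple transpositions
`s_m = (m, m+1)` (1-indexed). -/
def wordPerm (l : List ℕ) : Equiv.Perm ℕ :=
  (l.map (fun m => Equiv.swap m (m + 1))).prod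

/-- `l` is a reduced expression for `w ∈ S_n` in the generators `s_1, …, s_{n-1}`. -/
def IsReducedWord (n : ℕ) (l : List ℕ) (w : Equiv.Perm ℕ) : Prop :=
  (∀ m ∈ l, 1 ≤ m ∧ m < n) ∧ wordPerm l = w ∧
    ∀ l' : List ℕ, wordPerm l' = w → l.length ≤ l'.length

/-- `w = d(s)` is the permutation with `s = w ⬝ t^λ`. -/
def IsDPerm {n : ℕ} (w : Equiv.Perm ℕ) (s : StdTab n) : Prop :=
  ∀ c ∈ s.1.1, s.1.2.entry c = w (initEntry s.1.1 c)

/-- The product `ψ_w` of KLR generators along a word (1-indexed entries). -/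
noncomputable def psiWord (Z : Type*) [CommRing Z] (e n : ℕ) [NeZero e] (l : List ℕ) :
    KLR Z e n Finset.univ :=
  (l.map (fun m =>
    if h : 1 ≤ m ∧ m < n then Ψgen Z e n Finset.univ (m - 1) (by omega) else 1)).prod

/-- The element `y_λ = ∏ y_m`, over `m` whose column in `t^λ` is divisible by `e`. -/
noncomputable def yLambda (Z : Type*) [CommRing Z] (e n : ℕ) [NeZero e] (μ : YoungDiagram) :
    KLR Z e n Finset.univ :=
  ((μ.cells.toList.filter (fun c => (c.2 + 1) % e = 0)).map
    (fun c =>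
      if h : initEntry μ c - 1 < n then Ygen Z e n Finset.univ (initEntry μ c - 1) h
      else 1)).prod

/-- `st` is the homogeneous anti-involution `⋆` of the quiver Hecke algebra fixing the
KLR generators. -/
def KLRStarSpec (Z : Type*) [CommRing Z] (e n : ℕ) [NeZero e]
    (st : KLR Z e n Finset.univ →ₗ[Z] KLR Z e n Finset.univ) : Prop :=
  (∀ x y, st (x * y) = st y * st x) ∧
  (∀ (r : ℕ) (h : r + 1 < n), st (Ψgen Z e n Finset.univ r h) = Ψgen Z e n Finset.univ r h) ∧
  (∀ (s : ℕ) (hs : s < n), st (Ygen Z e n Finset.univ s hs) = Ygen Z e n Finset.univ s hs) ∧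
  (∀ i : nseq e n,
    st (Egen Z e n Finset.univ i (Finset.mem_univ i)) = Egen Z e n Finset.univ i (Finset.mem_univ i))

/-- `x` is the graded cellular basis element
`ψ_{st} = ψ_{d(s)} y_λ e(i^λ) ψ_{d(t)}^⋆` of Hu–Mathas. -/
def IsPsiSt (Z : Type*) [CommRing Z] (e n : ℕ) [NeZero e]
    (st : KLR Z e n Finset.univ →ₗ[Z] KLR Z e n Finset.univ)
    (p : StdPair n) (x : KLR Z e n Finset.univ) : Prop :=
  ∃ (ws wt : Equiv.Perm ℕ) (ls lt : List ℕ),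
    IsDPerm ws p.left ∧ IsDPerm wt p.right ∧
    IsReducedWord n ls ws ∧ IsReducedWord n lt wt ∧
    x = psiWord Z e n ls * yLambda Z e n p.1.1 *
        Egen Z e n Finset.univ (initResSeq e n p.1.1) (Finset.mem_univ _) *
        st (psiWord Z e n lt)

/-- The `(ℤ/2 × ℤ)`-grading on `R_n(S_n)`: `y_s` and `ψ_r e(i)` are odd,
and `ε_a(i) = e(i) + (-1)^a e(-i)` has degree `(a, 0)`. -/
def KLRSuperGradingSpec (Z : Type*) [CommRing Z] (e n : ℕ) [NeZero e]
    (𝒜 : ZMod 2 × ℤ → Submodule Z (KLR Z e n Finset.univ)) : Prop :=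
  (∀ (s : ℕ) (hs : s < n), Ygen Z e n Finset.univ s hs ∈ 𝒜 (1, 2)) ∧
  (∀ (r : ℕ) (h : r + 1 < n) (i : nseq e n),
    Ψgen Z e n Finset.univ r h * Egen Z e n Finset.univ i (Finset.mem_univ i) ∈
      𝒜 (1, - cartan e (i ⟨r, Nat.lt_of_succ_lt h⟩) (i ⟨r + 1, h⟩))) ∧
  (∀ (i : nseq e n) (a : ZMod 2),
    Egen Z e n Finset.univ i (Finset.mem_univ i) +
      (if a = 0 then 1 else -1) * Egen Z e n Finset.univ (-i) (Finset.mem_univ _) ∈ 𝒜 (a, 0))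

/-! ### Auxiliary lemmas for the proof -/

section AuxProof

variable (Z : Type*) [CommRing Z] (e n : ℕ) [NeZero e]

lemma swapSeq_invol (r : ℕ) (h : r + 1 < n) :
    Function.Involutive (swapSeq (e := e) r h) := by
  intro i; funext k
  simp [swapSeq, Function.comp, Equiv.swap_apply_self]

lemma mem_Iγ {g : Qtilde e n} {i : nseq e n} : i ∈ Iγ e n g ↔ gammaOf i = g := by
  simp [Iγ]

lemma mult_comp_perm (i : nseq e n) (σ : Equiv.Perm (Fin n)) : mult (i ∘ σ) = mult i := by
  unfold mult
  have h : Finset.univ.val.map ⇑σ = Finset.univ.val := by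
    calc Finset.univ.val.map ⇑σ = (Finset.univ.map σ.toEmbedding).val := rfl
    _ = Finset.univ.val := by rw [Finset.map_univ_equiv]
  conv_rhs => rw [← h]
  rw [Multiset.map_map]

lemma gammaOf_swapSeq (r : ℕ) (h : r + 1 < n) (i : nseq e n) :
    gammaOf (swapSeq r h i) = gammaOf i :=
  Quotient.sound (Or.inl (mult_comp_perm e n i _))

lemma gammaOf_neg (i : nseq e n) : gammaOf (-i) = gammaOf i := by
  refine Quotient.sound (Or.inr ?_)
  show Finset.univ.val.map (-i) = (Finset.univ.val.map i).map (fun x => -x)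
  rw [Multiset.map_map]
  rfl

lemma swap_mem_Iγ {g : Qtilde e n} (r : ℕ) (h : r + 1 < n) {i : nseq e n}
    (hi : i ∈ Iγ e n g) : swapSeq r h i ∈ Iγ e n g :=
  (mem_Iγ e n).mpr (by rw [gammaOf_swapSeq]; exact (mem_Iγ e n).mp hi)

lemma neg_mem_Iγ {g : Qtilde e n} {i : nseq e n} (hi : i ∈ Iγ e n g) : -i ∈ Iγ e n g :=
  (mem_Iγ e n).mpr (by rw [gammaOf_neg]; exact (mem_Iγ e n).mp hi)

/-- `e(i) e(j) = δ_{ij} e(i)` in the quiver Hecke algebra. -/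
lemma Egen_mul (i j : nseq e n) :
    Egen Z e n Finset.univ i (Finset.mem_univ i) * Egen Z e n Finset.univ j (Finset.mem_univ j)
      = if i = j then Egen Z e n Finset.univ i (Finset.mem_univ i) else 0 := by
  have h := RingQuot.mkAlgHom_rel Z
    (KLRRel.idem_mul (Z:=Z) (S:=Finset.univ) i j (Finset.mem_univ i) (Finset.mem_univ j))
  rw [map_mul] at h
  split_ifs at h ⊢ with hij
  · exact h
  · simp at h
    exact h

lemma Ygen_Egen (s : ℕ) (hs : s < n) (i : nseq e n) :
    Ygen Z e n Finset.univ s hs * Egen Z e n Finset.univ i (Finset.mem_univ i)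
      = Egen Z e n Finset.univ i (Finset.mem_univ i) * Ygen Z e n Finset.univ s hs := by
  have h := RingQuot.mkAlgHom_rel Z
    (KLRRel.y_idem (Z:=Z) (S:=Finset.univ) s hs i (Finset.mem_univ i))
  rw [map_mul, map_mul] at h
  exact h

lemma Psi_Egen (r : ℕ) (h : r + 1 < n) (i : nseq e n) :
    Ψgen Z e n Finset.univ r h * Egen Z e n Finset.univ i (Finset.mem_univ i)
      = Egen Z e n Finset.univ (swapSeq r h i) (Finset.mem_univ _) *
          Ψgen Z e n Finset.univ r h := by
  have hrel := RingQuot.mkAlgHom_rel Z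
    (KLRRel.psi_idem (Z:=Z) (S:=Finset.univ) r h i (Finset.mem_univ i) (Finset.mem_univ _))
  rw [map_mul, map_mul] at hrel
  exact hrel

lemma Egen_Psi (r : ℕ) (h : r + 1 < n) (i : nseq e n) :
    Egen Z e n Finset.univ i (Finset.mem_univ i) * Ψgen Z e n Finset.univ r h
      = Ψgen Z e n Finset.univ r h *
          Egen Z e n Finset.univ (swapSeq r h i) (Finset.mem_univ _) := by
  have h2 := Psi_Egen Z e n r h (swapSeq r h i)
  rw [swapSeq_invol e n r h i] at h2
  exact h2.symm

lemma Egen_sum :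
    (∑ i : nseq e n, Egen Z e n Finset.univ i (Finset.mem_univ i)) = 1 := by
  have h := RingQuot.mkAlgHom_rel Z (KLRRel.idem_sum (Z:=Z) (e:=e) (n:=n) (S:=Finset.univ))
  rw [map_sum, map_one] at h
  rw [← Finset.sum_attach Finset.univ
    (fun i => Egen Z e n Finset.univ i (Finset.mem_univ i))]
  exact h

lemma egam_eq (g : Qtilde e n) :
    egam Z e n g = ∑ i ∈ Iγ e n g, Egen Z e n Finset.univ i (Finset.mem_univ i) := by
  unfold egam
  exact Finset.sum_attach (Iγ e n g) (fun i => Egen Z e n Finset.univ i (Finset.mem_univ i))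

lemma sgn_egam (sgn : KLR Z e n Finset.univ ≃ₐ[Z] KLR Z e n Finset.univ)
    (hsgn : SgnSpec Z e n Finset.univ sgn) (g : Qtilde e n) :
    sgn (egam Z e n g) = egam Z e n g := by
  rw [egam_eq, map_sum]
  rw [show (∑ i ∈ Iγ e n g, sgn (Egen Z e n Finset.univ i (Finset.mem_univ i)))
      = ∑ i ∈ Iγ e n g, Egen Z e n Finset.univ (-i) (Finset.mem_univ _) from
    Finset.sum_congr rfl fun i _ => hsgn.2.2 i (Finset.mem_univ i) (Finset.mem_univ (-i))]
  refine Finset.sum_equiv (Equiv.neg (nseq e n)) (fun i => ?_) (fun i _ => rfl)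
  constructor
  · exact fun hi => neg_mem_Iγ e n hi
  · intro hi
    have := neg_mem_Iγ e n hi
    simpa using this

lemma egam_psi (g : Qtilde e n) (r : ℕ) (h : r + 1 < n) :
    egam Z e n g * Ψgen Z e n Finset.univ r h
      = Ψgen Z e n Finset.univ r h * egam Z e n g := by
  rw [egam_eq, Finset.sum_mul, Finset.mul_sum]
  rw [show (∑ i ∈ Iγ e n g,
        Egen Z e n Finset.univ i (Finset.mem_univ i) * Ψgen Z e n Finset.univ r h)
      = ∑ i ∈ Iγ e n g, Ψgen Z e n Finset.univ r h *
          Egen Z e n Finset.univ (swapSeq r h i) (Finset.mem_univ _) from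
    Finset.sum_congr rfl fun i _ => Egen_Psi Z e n r h i]
  refine Finset.sum_equiv ((swapSeq_invol e n r h).toPerm _) (fun i => ?_) (fun i _ => rfl)
  constructor
  · exact fun hi => swap_mem_Iγ e n r h hi
  · intro hi
    have := swap_mem_Iγ e n r h hi
    rwa [show ((swapSeq_invol e n r h).toPerm _) i = swapSeq r h i from rfl,
      swapSeq_invol e n r h i] at this

lemma egam_y (g : Qtilde e n) (s : ℕ) (hs : s < n) :
    egam Z e n g * Ygen Z e n Finset.univ s hs
      = Ygen Z e n Finset.univ s hs * egam Z e n g := by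
  rw [egam_eq, Finset.sum_mul, Finset.mul_sum]
  exact Finset.sum_congr rfl fun i _ => (Ygen_Egen Z e n s hs i).symm

lemma egam_E_aux (g : Qtilde e n) (j : nseq e n) :
    egam Z e n g * Egen Z e n Finset.univ j (Finset.mem_univ j)
      = if j ∈ Iγ e n g then Egen Z e n Finset.univ j (Finset.mem_univ j) else 0 := by
  rw [egam_eq, Finset.sum_mul]
  rw [show (∑ i ∈ Iγ e n g, Egen Z e n Finset.univ i (Finset.mem_univ i) *
        Egen Z e n Finset.univ j (Finset.mem_univ j))
      = ∑ i ∈ Iγ e n g,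
        (if i = j then Egen Z e n Finset.univ j (Finset.mem_univ j) else 0) from
    Finset.sum_congr rfl fun i _ => by
      rw [Egen_mul]
      by_cases hij : i = j
      · subst hij; simp
      · simp [hij]]
  rw [Finset.sum_ite_eq' (Iγ e n g) j]

lemma E_egam_aux (g : Qtilde e n) (j : nseq e n) :
    Egen Z e n Finset.univ j (Finset.mem_univ j) * egam Z e n g
      = if j ∈ Iγ e n g then Egen Z e n Finset.univ j (Finset.mem_univ j) else 0 := by
  rw [egam_eq, Finset.mul_sum]
  rw [show (∑ i ∈ Iγ e n g, Egen Z e n Finset.univ j (Finset.mem_univ j) *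
        Egen Z e n Finset.univ i (Finset.mem_univ i))
      = ∑ i ∈ Iγ e n g,
        (if j = i then Egen Z e n Finset.univ j (Finset.mem_univ j) else 0) from
    Finset.sum_congr rfl fun i _ => by rw [Egen_mul]]
  rw [Finset.sum_ite_eq (Iγ e n g) j]

lemma egam_E_of {g : Qtilde e n} {j : nseq e n} (hj : gammaOf j = g) :
    egam Z e n g * Egen Z e n Finset.univ j (Finset.mem_univ j)
      = Egen Z e n Finset.univ j (Finset.mem_univ j) := by
  rw [egam_E_aux, if_pos ((mem_Iγ e n).mpr hj)]

lemma egam_E_ne {g : Qtilde e n} {j : nseq e n} (hj : gammaOf j ≠ g) :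
    egam Z e n g * Egen Z e n Finset.univ j (Finset.mem_univ j) = 0 := by
  rw [egam_E_aux, if_neg (fun hm => hj ((mem_Iγ e n).mp hm))]

lemma E_egam_of {g : Qtilde e n} {j : nseq e n} (hj : gammaOf j = g) :
    Egen Z e n Finset.univ j (Finset.mem_univ j) * egam Z e n g
      = Egen Z e n Finset.univ j (Finset.mem_univ j) := by
  rw [E_egam_aux, if_pos ((mem_Iγ e n).mpr hj)]

lemma E_egam_ne {g : Qtilde e n} {j : nseq e n} (hj : gammaOf j ≠ g) :
    Egen Z e n Finset.univ j (Finset.mem_univ j) * egam Z e n g = 0 := by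
  rw [E_egam_aux, if_neg (fun hm => hj ((mem_Iγ e n).mp hm))]

/-- Induction principle for the quiver Hecke algebra in terms of its generators. -/
lemma klr_induction {C : KLR Z e n Finset.univ → Prop}
    (halg : ∀ z : Z, C (algebraMap Z _ z))
    (hpsi : ∀ (r : ℕ) (h : r + 1 < n), C (Ψgen Z e n Finset.univ r h))
    (hy : ∀ (s : ℕ) (hs : s < n), C (Ygen Z e n Finset.univ s hs))
    (hE : ∀ i : nseq e n, C (Egen Z e n Finset.univ i (Finset.mem_univ i)))
    (hmul : ∀ x y, C x → C y → C (x * y))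
    (hadd : ∀ x y, C x → C y → C (x + y)) : ∀ x, C x := by
  intro x
  obtain ⟨y, rfl⟩ := RingQuot.mkAlgHom_surjective Z (KLRRel Z e n Finset.univ) x
  refine FreeAlgebra.induction Z _ (fun z => ?_) (fun g => ?_)
    (fun a b ha hb => ?_) (fun a b ha hb => ?_) y
  · rw [AlgHom.commutes]; exact halg z
  · cases g with
    | psi r h => exact hpsi r h
    | y s hs => exact hy s hs
    | idem i hi => exact hE i
  · rw [map_mul]; exact hmul _ _ ha hb
  · rw [map_add]; exact hadd _ _ ha hb

lemma egam_central (g : Qtilde e n) (x : KLR Z e n Finset.univ) :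
    egam Z e n g * x = x * egam Z e n g := by
  refine klr_induction Z e n (C := fun x => egam Z e n g * x = x * egam Z e n g)
    ?_ ?_ ?_ ?_ ?_ ?_ x
  · exact fun z => (Algebra.commutes z _).symm
  · exact fun r h => egam_psi Z e n g r h
  · exact fun s hs => egam_y Z e n g s hs
  · intro i
    by_cases hi : gammaOf i = g
    · rw [egam_E_of Z e n hi, E_egam_of Z e n hi]
    · rw [egam_E_ne Z e n hi, E_egam_ne Z e n hi]
  · intro a b ha hb
    rw [← mul_assoc, ha, mul_assoc, hb, mul_assoc]
  · intro a b ha hb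
    rw [mul_add, ha, hb, add_mul]

lemma egam_idem (g : Qtilde e n) : egam Z e n g * egam Z e n g = egam Z e n g := by
  classical
  rw [egam_eq, Finset.sum_mul_sum]
  refine Finset.sum_congr rfl fun i hi => ?_
  rw [show (∑ j ∈ Iγ e n g, Egen Z e n Finset.univ i (Finset.mem_univ i) *
        Egen Z e n Finset.univ j (Finset.mem_univ j))
      = ∑ j ∈ Iγ e n g,
        (if i = j then Egen Z e n Finset.univ i (Finset.mem_univ i) else 0) from
    Finset.sum_congr rfl fun j _ => by rw [Egen_mul]]
  rw [Finset.sum_ite_eq (Iγ e n g) i, if_pos hi]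

lemma egam_orth {g g' : Qtilde e n} (hgg : g ≠ g') :
    egam Z e n g * egam Z e n g' = 0 := by
  rw [egam_eq, egam_eq, Finset.sum_mul_sum]
  refine Finset.sum_eq_zero fun i hi => Finset.sum_eq_zero fun j hj => ?_
  rw [Egen_mul, if_neg]
  intro hij
  exact hgg (by rw [← (mem_Iγ e n).mp hi, hij, (mem_Iγ e n).mp hj])

/-- The sign automorphism fixes negation-symmetric Cartan values. -/
lemma cartan_neg (a b : ZMod e) : cartan e (-a) (-b) = cartan e a b := by
  have key : ∀ x y : ZMod e, (-x = -y + 1) ↔ (y = x + 1) := by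
    intro x y
    constructor <;> intro h <;> linear_combination h
  unfold cartan
  by_cases hab : a = b
  · subst hab; simp
  · rw [if_neg hab, if_neg (fun h => hab (neg_inj.mp h))]
    by_cases hc : b = a + 1 ∨ a = b + 1
    · rw [if_pos hc, if_pos ?_]
      rcases hc with h | h
      · exact Or.inr ((key a b).mpr h)
      · exact Or.inl ((key b a).mpr h)
    · rw [if_neg hc, if_neg ?_]
      intro hc2
      apply hc
      rcases hc2 with h | h
      · exact Or.inr ((key b a).mp h)
      · exact Or.inl ((key a b).mp h)

lemma decompose_finsum {ι : Type*} [DecidableEq ι] [AddMonoid ι] {R A : Type*}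
    [CommRing R] [Ring A] [Algebra R A] (𝒜 : ι → Submodule R A) [GradedAlgebra 𝒜]
    (s : Finset ι) (g : ι → A) (hg : ∀ d ∈ s, g d ∈ 𝒜 d) (d : ι) :
    (DirectSum.decompose 𝒜 (∑ d' ∈ s, g d') d : A) = if d ∈ s then g d else 0 := by
  classical
  rw [DirectSum.decompose_sum, DFinsupp.finset_sum_apply, AddSubmonoidClass.coe_finset_sum]
  rw [show (∑ d' ∈ s, ((DirectSum.decompose 𝒜 (g d')) d : A))
      = ∑ d' ∈ s, if d' = d then g d else 0 from
    Finset.sum_congr rfl fun d' hd' => by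
      by_cases hdd : d' = d
      · subst hdd
        rw [DirectSum.decompose_of_mem_same 𝒜 (hg d' hd'), if_pos rfl]
      · rw [DirectSum.decompose_of_mem_ne 𝒜 (hg d' hd') hdd, if_neg hdd]]
  rw [Finset.sum_ite_eq' s d (fun _ => g d)]

end AuxProof

section SupN

variable (Z : Type*) [CommRing Z] (e n : ℕ) [NeZero e]

lemma sup_N_top (𝒜 : ℤ → Submodule Z (KLR Z e n Finset.univ)) [GradedAlgebra 𝒜]
    (hspec : KLRGradingSpec Z e n Finset.univ 𝒜)
    (sgn : KLR Z e n Finset.univ ≃ₐ[Z] KLR Z e n Finset.univ)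
    (hsgn : SgnSpec Z e n Finset.univ sgn) :
    (⨆ d : ℤ, (𝒜 d ⊓ Submodule.comap sgn.toLinearMap (𝒜 d))) = ⊤ := by
  set N : ℤ → Submodule Z (KLR Z e n Finset.univ) :=
    fun d => 𝒜 d ⊓ Submodule.comap sgn.toLinearMap (𝒜 d) with hN
  have hNmem : ∀ (d : ℤ) (x : KLR Z e n Finset.univ),
      x ∈ 𝒜 d → sgn x ∈ 𝒜 d → x ∈ N d := by
    intro d x h1 h2
    refine Submodule.mem_inf.mpr ⟨h1, Submodule.mem_comap.mpr ?_⟩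
    simpa using h2
  have hmulT : ∀ a ∈ (⨆ d, N d), ∀ b ∈ (⨆ d, N d), a * b ∈ (⨆ d, N d) := by
    intro a ha
    refine Submodule.iSup_induction N
      (motive := fun a => ∀ b ∈ (⨆ d, N d), a * b ∈ (⨆ d, N d)) ha ?_ ?_ ?_
    · intro d a haN b hb
      refine Submodule.iSup_induction N (motive := fun b => a * b ∈ (⨆ d, N d)) hb ?_ ?_ ?_
      · intro d' b hbN
        refine Submodule.mem_iSup_of_mem (d + d') (hNmem _ _ ?_ ?_)
        · exact SetLike.mul_mem_graded (Submodule.mem_inf.mp haN).1 (Submodule.mem_inf.mp hbN).1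
        · rw [map_mul]
          have h2a : sgn a ∈ 𝒜 d := by
            have := Submodule.mem_comap.mp (Submodule.mem_inf.mp haN).2
            simpa using this
          have h2b : sgn b ∈ 𝒜 d' := by
            have := Submodule.mem_comap.mp (Submodule.mem_inf.mp hbN).2
            simpa using this
          exact SetLike.mul_mem_graded h2a h2b
      · simp
      · intro u v hu hv
        rw [mul_add]
        exact add_mem hu hv
    · intro b hb
      rw [zero_mul]
      exact zero_mem _
    · intro u v hu hv b hb
      rw [add_mul]
      exact add_mem (hu b hb) (hv b hb)
  have h1T : (1 : KLR Z e n Finset.univ) ∈ ⨆ d, N d :=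
    Submodule.mem_iSup_of_mem 0
      (hNmem 0 1 (SetLike.one_mem_graded 𝒜) (by rw [map_one]; exact SetLike.one_mem_graded 𝒜))
  rw [eq_top_iff]
  intro x _
  refine klr_induction Z e n (C := fun x => x ∈ ⨆ d, N d) ?_ ?_ ?_ ?_ ?_ ?_ x
  · intro z
    rw [Algebra.algebraMap_eq_smul_one]
    exact Submodule.smul_mem _ z h1T
  · intro r h
    have hψ : Ψgen Z e n Finset.univ r h
        = ∑ i : nseq e n, Ψgen Z e n Finset.univ r h *
            Egen Z e n Finset.univ i (Finset.mem_univ i) := by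
      rw [← Finset.mul_sum, Egen_sum, mul_one]
    rw [hψ]
    refine Submodule.sum_mem _ fun i _ => ?_
    refine Submodule.mem_iSup_of_mem
      (-(cartan e (i ⟨r, Nat.lt_of_succ_lt h⟩) (i ⟨r + 1, h⟩))) (hNmem _ _ ?_ ?_)
    · exact hspec.2.2 r h i (Finset.mem_univ i)
    · rw [map_mul, hsgn.1 r h, hsgn.2.2 i (Finset.mem_univ i) (Finset.mem_univ (-i))]
      have hcc : cartan e ((-i) ⟨r, Nat.lt_of_succ_lt h⟩) ((-i) ⟨r + 1, h⟩)
          = cartan e (i ⟨r, Nat.lt_of_succ_lt h⟩) (i ⟨r + 1, h⟩) := by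
        rw [Pi.neg_apply, Pi.neg_apply, cartan_neg]
      have hmem := hspec.2.2 r h (-i) (Finset.mem_univ (-i))
      rw [hcc] at hmem
      have hfin := Submodule.neg_mem _ hmem
      convert hfin using 1
      exact neg_mul (Ψgen Z e n Finset.univ r h) (Egen Z e n Finset.univ (-i) (Finset.mem_univ (-i)))
  · intro s hs
    refine Submodule.mem_iSup_of_mem 2 (hNmem _ _ (hspec.2.1 s hs) ?_)
    rw [hsgn.2.1 s hs]
    exact Submodule.neg_mem _ (hspec.2.1 s hs)
  · intro i
    refine Submodule.mem_iSup_of_mem 0 (hNmem _ _ (hspec.1 i (Finset.mem_univ i)) ?_)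
    rw [hsgn.2.2 i (Finset.mem_univ i) (Finset.mem_univ (-i))]
    exact hspec.1 (-i) (Finset.mem_univ (-i))
  · exact fun a b ha hb => hmulT a ha b hb
  · exact fun a b ha hb => add_mem ha hb

end SupN

section MemHelpers

variable (Z : Type*) [CommRing Z] (e n : ℕ) [NeZero e]

lemma mem_RAnGammaSub {sgn : KLR Z e n Finset.univ ≃ₐ[Z] KLR Z e n Finset.univ}
    {g : Qtilde e n} {x : KLR Z e n Finset.univ} :
    x ∈ RAnGammaSub Z e n sgn g ↔
      (sgn x = x ∧ egam Z e n g * x = x ∧ x * egam Z e n g = x) := Iff.rfl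

lemma mem_fixedsub {sgn : KLR Z e n Finset.univ ≃ₐ[Z] KLR Z e n Finset.univ}
    {x : KLR Z e n Finset.univ} :
    x ∈ Subalgebra.toSubmodule (fixedSubalgebra Z sgn.toAlgHom) ↔ sgn x = x := Iff.rfl

end MemHelpers
/-- As a graded algebra, `R_n(A_n) = ⊕_{γ ∈ Q̃⁺_n} R_n(A_n)_γ` is a direct sum of
two-sided `ℤ`-graded ideals, where `R_n(A_n)_γ` consists of the `sgn`-fixed elements of
the block `R_γ = e_γ R_n(S_n)`. -/
theorem alternating_quiver_hecke_block_decomposition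
    (Z : Type*) [CommRing Z] (e n : ℕ) [NeZero e] (he : 2 < e)
    (sgn : KLR Z e n Finset.univ ≃ₐ[Z] KLR Z e n Finset.univ)
    (hsgn : SgnSpec Z e n Finset.univ sgn) :
    (∀ γ : Qtilde e n, ∀ x ∈ RAnGammaSub Z e n sgn γ,
      ∀ y : KLR Z e n Finset.univ, sgn y = y →
        x * y ∈ RAnGammaSub Z e n sgn γ ∧ y * x ∈ RAnGammaSub Z e n sgn γ) ∧
    iSupIndep (RAnGammaSub Z e n sgn) ∧
    (⨆ γ : Qtilde e n, RAnGammaSub Z e n sgn γ) =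
      Subalgebra.toSubmodule (fixedSubalgebra Z sgn.toAlgHom) ∧
    (∀ 𝒜 : ℤ → Submodule Z (KLR Z e n Finset.univ),
      Nonempty (GradedAlgebra 𝒜) → KLRGradingSpec Z e n Finset.univ 𝒜 →
      ∀ γ : Qtilde e n,
        RAnGammaSub Z e n sgn γ ≤ Submodule.span Z
          {y | y ∈ RAnGammaSub Z e n sgn γ ∧ ∃ d : ℤ, y ∈ 𝒜 d}) := by
  classical
  constructor
  · -- two-sided ideal property
    intro γ x hx y hy
    obtain ⟨h1, h2, h3⟩ := (mem_RAnGammaSub Z e n).mp hx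
    constructor
    · refine (mem_RAnGammaSub Z e n).mpr ⟨?_, ?_, ?_⟩
      · rw [map_mul, h1, hy]
      · rw [← mul_assoc, h2]
      · rw [mul_assoc, ← egam_central Z e n γ y, ← mul_assoc, h3]
    · refine (mem_RAnGammaSub Z e n).mpr ⟨?_, ?_, ?_⟩
      · rw [map_mul, hy, h1]
      · rw [← mul_assoc, egam_central Z e n γ y, mul_assoc, h2]
      · rw [mul_assoc, h3]
  constructor
  · -- independence
    intro γ
    refine Submodule.disjoint_def.mpr fun x hx hx' => ?_
    have hker : (⨆ j, ⨆ (_ : j ≠ γ), RAnGammaSub Z e n sgn j) ≤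
        LinearMap.ker (LinearMap.mulLeft Z (egam Z e n γ)) := by
      refine iSup_le fun j => iSup_le fun hj => ?_
      intro y hy
      obtain ⟨hy1, hy2, hy3⟩ := (mem_RAnGammaSub Z e n).mp hy
      rw [LinearMap.mem_ker, LinearMap.mulLeft_apply]
      rw [← hy2, ← mul_assoc, egam_orth Z e n (Ne.symm hj), zero_mul]
    have h0 := hker hx'
    rw [LinearMap.mem_ker, LinearMap.mulLeft_apply] at h0
    obtain ⟨_, hx2, _⟩ := (mem_RAnGammaSub Z e n).mp hx
    rw [← hx2, h0]
  constructor
  · -- sup equals fixed subalgebra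
    apply le_antisymm
    · refine iSup_le fun γ => fun x hx => ?_
      exact (mem_fixedsub Z e n).mpr ((mem_RAnGammaSub Z e n).mp hx).1
    · intro x hx
      have h1 : sgn x = x := (mem_fixedsub Z e n).mp hx
      have hfib := Finset.sum_fiberwise_of_maps_to
        (s := (Finset.univ : Finset (nseq e n)))
        (t := Finset.univ.image (fun i : nseq e n => gammaOf i))
        (g := fun i : nseq e n => gammaOf i)
        (fun i _ => Finset.mem_image_of_mem _ (Finset.mem_univ i))
        (fun i => Egen Z e n Finset.univ i (Finset.mem_univ i))
      rw [Egen_sum] at hfib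
      have hone : (1 : KLR Z e n Finset.univ)
          = ∑ g ∈ Finset.univ.image (fun i : nseq e n => gammaOf i), egam Z e n g := by
        rw [← hfib]
        refine Finset.sum_congr rfl fun g _ => ?_
        rw [egam_eq]
        refine Finset.sum_congr ?_ fun _ _ => rfl
        ext i
        simp [Finset.mem_filter, mem_Iγ]
      have hxsum : x = ∑ g ∈ Finset.univ.image (fun i : nseq e n => gammaOf i),
          egam Z e n g * x := by
        conv_lhs => rw [← one_mul x, hone, Finset.sum_mul]
      rw [hxsum]
      refine Submodule.sum_mem _ fun g _ => ?_
      refine Submodule.mem_iSup_of_mem g ?_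
      refine (mem_RAnGammaSub Z e n).mpr ⟨?_, ?_, ?_⟩
      · rw [map_mul, sgn_egam Z e n sgn hsgn g, h1]
      · rw [← mul_assoc, egam_idem]
      · rw [mul_assoc, ← egam_central Z e n g x, ← mul_assoc, egam_idem]
  · -- graded pieces
    intro 𝒜 hne hspec γ
    obtain ⟨inst⟩ := hne
    letI : GradedAlgebra 𝒜 := inst
    intro x hx
    obtain ⟨h1, h2, h3⟩ := (mem_RAnGammaSub Z e n).mp hx
    have hNtop := sup_N_top Z e n 𝒜 hspec sgn hsgn
    have hxT : x ∈ ⨆ d : ℤ, (𝒜 d ⊓ Submodule.comap sgn.toLinearMap (𝒜 d)) := by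
      rw [hNtop]; trivial
    rw [Submodule.mem_iSup_iff_exists_finsupp] at hxT
    obtain ⟨f, hf, hsum⟩ := hxT
    have hf1 : ∀ d, f d ∈ 𝒜 d := fun d => (Submodule.mem_inf.mp (hf d)).1
    have hf2 : ∀ d, sgn (f d) ∈ 𝒜 d := fun d => by
      have := Submodule.mem_comap.mp (Submodule.mem_inf.mp (hf d)).2
      simpa using this
    have hx_eq : x = ∑ d ∈ f.support, f d := by rw [← hsum]; rfl
    have hegam0 : egam Z e n γ ∈ 𝒜 0 := by
      rw [egam_eq]
      exact Submodule.sum_mem _ fun i _ => hspec.1 i (Finset.mem_univ i)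
    have hdx : ∀ d : ℤ, (DirectSum.decompose 𝒜 x d : KLR Z e n Finset.univ)
        = if d ∈ f.support then f d else 0 := by
      intro d
      rw [hx_eq]
      exact decompose_finsum 𝒜 _ _ (fun d' _ => hf1 d') d
    have hsgn_comp : ∀ d ∈ f.support, sgn (f d) = f d := by
      intro d hd
      have e1 : sgn x = ∑ d ∈ f.support, sgn (f d) := by rw [hx_eq, map_sum]
      have e2 := decompose_finsum 𝒜 f.support (fun d => sgn (f d)) (fun d' _ => hf2 d') d
      rw [← e1, h1, hdx d, if_pos hd, if_pos hd] at e2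
      exact e2.symm
    have hL : ∀ d ∈ f.support, egam Z e n γ * f d = f d := by
      intro d hd
      have e1 : egam Z e n γ * x = ∑ d ∈ f.support, egam Z e n γ * f d := by
        rw [hx_eq, Finset.mul_sum]
      have hmem : ∀ d' ∈ f.support, egam Z e n γ * f d' ∈ 𝒜 d' := fun d' _ => by
        have := SetLike.mul_mem_graded hegam0 (hf1 d')
        rwa [zero_add] at this
      have e2 := decompose_finsum 𝒜 f.support (fun d => egam Z e n γ * f d) hmem d
      rw [← e1, h2, hdx d, if_pos hd, if_pos hd] at e2
      exact e2.symm
    have hR : ∀ d ∈ f.support, f d * egam Z e n γ = f d := by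
      intro d hd
      have e1 : x * egam Z e n γ = ∑ d ∈ f.support, f d * egam Z e n γ := by
        rw [hx_eq, Finset.sum_mul]
      have hmem : ∀ d' ∈ f.support, f d' * egam Z e n γ ∈ 𝒜 d' := fun d' _ => by
        have := SetLike.mul_mem_graded (hf1 d') hegam0
        rwa [add_zero] at this
      have e2 := decompose_finsum 𝒜 f.support (fun d => f d * egam Z e n γ) hmem d
      rw [← e1, h3, hdx d, if_pos hd, if_pos hd] at e2
      exact e2.symm
    rw [hx_eq]
    refine Submodule.sum_mem _ fun d hd => ?_
    refine Submodule.subset_span ?_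
    exact ⟨(mem_RAnGammaSub Z e n).mpr ⟨hsgn_comp d hd, hL d hd, hR d hd⟩, d, hf1 d⟩

end QH
end

section
/- Let (O, t) be an e-idempotent subring. For γ ∈ Q̃⁺_n set f_γ^O = Σ_{i∈I^γ} f_i^O. Then f_γ^O is a central idempotent of H^O = H_t^O(S_n), and H^O = ⊕_{γ∈Q̃⁺_n} H^O_γ where H^O_γ = H^O f_γ^O. -/
open scoped BigOperators

namespace QH


variable (Z : Type*) [CommRing Z] (e n : ℕ) (S : Finset (nseq e n))

/-! ### Auxiliary lemmas for the proof -/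

section Qint
variable {K : Type*} [Field K] {t : K}

theorem qint_zero : qint t 0 = 0 := by simp [qint]

theorem qint_succ (ht : t ≠ 0) (k : ℤ) : qint t (k + 1) = qint t k + t ^ k := by
  rcases le_or_gt 0 k with hk | hk
  · rw [qint, qint, if_pos (by omega), if_pos hk]
    have : (k + 1).toNat = k.toNat + 1 := by omega
    rw [this, Finset.sum_range_succ, Int.toNat_of_nonneg hk]
  · rcases eq_or_lt_of_le (by omega : k + 1 ≤ 0) with h0 | h0
    · have hk1 : k = -1 := by omega
      subst hk1
      simp [qint, Finset.sum_range_succ]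
    · rw [qint, qint, if_neg (by omega), if_neg (by omega)]
      have h2 : (-k).toNat = (-(k+1)).toNat + 1 := by omega
      rw [h2, Finset.sum_range_succ]
      have h3 : -(((-(k+1)).toNat : ℤ)) - 1 = k := by omega
      rw [h3]
      ring

theorem qint_add (ht : t ≠ 0) (b d : ℤ) : qint t (b + d) = qint t b + t ^ b * qint t d := by
  induction d using Int.induction_on with
  | zero => simp [qint_zero]
  | succ i ih =>
      have h1 : b + ((i : ℤ) + 1) = (b + i) + 1 := by ring
      rw [h1, qint_succ ht, ih, qint_succ ht, zpow_add₀ ht]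
      ring
  | pred i ih =>
      have h1 : (b + (-(i:ℤ) - 1)) + 1 = b + -(i:ℤ) := by ring
      have h2 : ((-(i:ℤ) - 1)) + 1 = -(i:ℤ) := by ring
      have e1 := qint_succ ht (b + (-(i:ℤ) - 1))
      have e2 := qint_succ ht (-(i:ℤ) - 1)
      rw [h1] at e1; rw [h2] at e2
      have : qint t (b + (-(i:ℤ) - 1)) = qint t (b + -(i:ℤ)) - t ^ (b + (-(i:ℤ)-1)) := by
        rw [e1]; ring
      rw [this, ih, e2, zpow_add₀ ht]
      ring

theorem qint_sub_eq (ht : t ≠ 0) (a c : ℤ) : qint t a - qint t c = t ^ c * qint t (a - c) := by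
  have := qint_add ht c (a - c)
  rw [show c + (a - c) = a by ring] at this
  rw [this]; ring

end Qint
section Units
variable {K : Type*} [Field K] {O : Subring K} {t : K} {e n : ℕ} [NeZero e]

theorem zpow_mem_O (ht : t ≠ 0) (hO : IsIdemSubring K O t e n) (z : ℤ) : t ^ z ∈ O := by
  obtain ⟨u, hu, htu⟩ := hO.t_unit
  have hut : u = t⁻¹ := by field_simp at htu ⊢; linear_combination htu
  rcases le_or_gt 0 z with hz | hz
  · lift z to ℕ using hz
    rw [zpow_natCast]; exact pow_mem hO.t_mem z
  · have : t ^ z = u ^ (-z).toNat := by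
      rw [hut, ← zpow_natCast t⁻¹, inv_zpow, ← zpow_neg]
      congr 1
      omega
    rw [this]; exact pow_mem hu _

/-- each factor `[a] - [c]` is invertible in `O` when the residues differ -/
theorem factor_unit (ht : t ≠ 0) (hO : IsIdemSubring K O t e n) (a c : ℤ)
    (hres : ((a : ZMod e)) ≠ (c : ZMod e)) :
    ∃ w ∈ O, (qint t a - qint t c) * w = 1 := by
  have hdvd : ¬ ((e : ℤ) ∣ (a - c)) := by
    intro hd
    apply hres
    have : ((a - c : ℤ) : ZMod e) = 0 := (ZMod.intCast_zmod_eq_zero_iff_dvd _ _).mpr hd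
    push_cast at this
    exact sub_eq_zero.mp this
  obtain ⟨v, hv, hqv⟩ := hO.qint_unit (a - c) hdvd
  refine ⟨t ^ (-c) * v, mul_mem (zpow_mem_O ht hO _) hv, ?_⟩
  rw [qint_sub_eq ht]
  have : t ^ c * qint t (a - c) * (t ^ (-c) * v) = (t ^ c * t ^ (-c)) * (qint t (a-c) * v) := by ring
  rw [this, ← zpow_add₀ ht, add_neg_cancel, zpow_zero, one_mul, hqv]

end Units
section Tableaux

/-- cells of a diagram with `card = n` have coordinates `< n` -/
theorem cell_lt_card {μ : YoungDiagram} {c : ℕ × ℕ} (hc : c ∈ μ) :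
    c.1 < μ.card ∧ c.2 < μ.card := by
  have hcard : μ.card = μ.cells.card := rfl
  rw [hcard]
  constructor
  · have hsub : (Finset.range (c.1 + 1)).image (fun r => (r, c.2)) ⊆ μ.cells := by
      intro x hx
      simp only [Finset.mem_image, Finset.mem_range] at hx
      obtain ⟨r, hr, rfl⟩ := hx
      rw [YoungDiagram.mem_cells]
      exact μ.up_left_mem (by omega) le_rfl hc
    have := Finset.card_le_card hsub
    rw [Finset.card_image_of_injective _ (fun a b h => by simpa using h),
      Finset.card_range] at this
    omega
  · have hsub : (Finset.range (c.2 + 1)).image (fun j => (c.1, j)) ⊆ μ.cells := by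
      intro x hx
      simp only [Finset.mem_image, Finset.mem_range] at hx
      obtain ⟨j, hj, rfl⟩ := hx
      rw [YoungDiagram.mem_cells]
      exact μ.up_left_mem le_rfl (by omega) hc
    have := Finset.card_le_card hsub
    rw [Finset.card_image_of_injective _ (fun a b h => by simpa using h),
      Finset.card_range] at this
    omega

theorem entry_ne_zero {μ : YoungDiagram} (T : StdTableau μ) {c : ℕ × ℕ} (hc : c ∈ μ) :
    T.entry c ≠ 0 := by
  have := T.mem_entry c hc
  simp only [Finset.mem_Icc] at this
  omega

/-- two standard tableaux of the same shape with the same entries are equal -/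
theorem StdTableau.ext' {μ : YoungDiagram} {T U : StdTableau μ}
    (h : T.entry = U.entry) : T = U := by
  cases T; cases U; simp_all

theorem stdtab_finite (n : ℕ) : Finite (StdTab n) := by
  classical
  let F : StdTab n → (Fin n × Fin n → Fin (n + 1)) := fun s => fun c =>
    ⟨s.1.2.entry (c.1.1, c.2.1), by
      by_cases hc : ((c.1.1 : ℕ), (c.2.1 : ℕ)) ∈ s.1.1
      · have := s.1.2.mem_entry _ hc
        simp only [Finset.mem_Icc, s.2] at this
        omega
      · rw [s.1.2.zero_off _ hc]; omega⟩
  have hF : Function.Injective F := by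
    intro s u h
    have hent : ∀ c : ℕ × ℕ, s.1.2.entry c = u.1.2.entry c := by
      intro c
      by_cases hcs : c ∈ s.1.1
      · have h1 := (cell_lt_card hcs).1
        have h2 := (cell_lt_card hcs).2
        rw [s.2] at h1 h2
        have := congrArg Fin.val (congrFun h (⟨c.1, h1⟩, ⟨c.2, h2⟩))
        simpa [F] using this
      · by_cases hcu : c ∈ u.1.1
        · have h1 := (cell_lt_card hcu).1
          have h2 := (cell_lt_card hcu).2
          rw [u.2] at h1 h2
          have := congrArg Fin.val (congrFun h (⟨c.1, h1⟩, ⟨c.2, h2⟩))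
          simpa [F] using this
        · rw [s.1.2.zero_off _ hcs, u.1.2.zero_off _ hcu]
    have hsh : s.1.1 = u.1.1 := by
      ext c
      constructor
      · intro hc
        by_contra hcu
        exact entry_ne_zero s.1.2 hc ((hent c).trans (u.1.2.zero_off c hcu))
      · intro hc
        by_contra hcs
        exact entry_ne_zero u.1.2 hc ((hent c).symm.trans (s.1.2.zero_off c hcs))
    obtain ⟨⟨μ, T⟩, hs⟩ := s
    obtain ⟨⟨ν, U⟩, hu⟩ := u
    change μ = ν at hsh
    subst hsh
    have : T = U := StdTableau.ext' (funext hent)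
    subst this
    rfl
  exact Finite.of_injective F hF

end Tableaux
section CellOf
variable {μ : YoungDiagram}

theorem cellOf_spec (T : StdTableau μ) {m : ℕ} (h1 : 1 ≤ m) (h2 : m ≤ μ.card) :
    T.cellOf m ∈ μ ∧ T.entry (T.cellOf m) = m := by
  obtain ⟨c, hc, hcm⟩ := T.surjOn m (Finset.mem_Icc.mpr ⟨h1, h2⟩)
  have ex : ∃ a ∈ (↑μ.cells : Set (ℕ × ℕ)), T.entry a = m :=
    ⟨c, by rwa [Finset.mem_coe, YoungDiagram.mem_cells], hcm⟩
  constructor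
  · have := Function.invFunOn_mem ex
    rwa [Finset.mem_coe, YoungDiagram.mem_cells] at this
  · exact Function.invFunOn_eq ex

theorem resSeqT_eq_cast {n : ℕ} (e : ℕ) (s : StdTab n) (k : Fin n) :
    ((s.contentT (k.1 + 1) : ℤ) : ZMod e) = s.resSeqT e k := by
  simp only [StdTab.contentT, StdTableau.contentAt, StdTab.resSeqT]
  push_cast
  ring

theorem content_bound {n : ℕ} (s : StdTab n) (k : Fin n) :
    -(n : ℤ) < s.contentT (k.1 + 1) ∧ s.contentT (k.1 + 1) < n := by
  have h := cellOf_spec s.1.2 (m := k.1 + 1) (by omega) (by rw [s.2]; omega)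
  have hb := cell_lt_card h.1
  rw [s.2] at hb
  simp only [StdTab.contentT, StdTableau.contentAt]
  omega

theorem mult_resSeqT {n e : ℕ} [NeZero e] (s : StdTab n) :
    mult (s.resSeqT e) =
      s.1.1.cells.val.map (fun c => ((c.2 : ZMod e) - (c.1 : ZMod e))) := by
  classical
  set μ := s.1.1 with hμ
  let c : Fin n → ℕ × ℕ := fun k => s.1.2.cellOf (k.1 + 1)
  have hspec : ∀ k : Fin n, c k ∈ μ ∧ s.1.2.entry (c k) = k.1 + 1 := fun k =>
    cellOf_spec s.1.2 (by omega) (by rw [s.2]; omega)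
  have hinj : Function.Injective c := by
    intro a b hab
    have : (a.1 + 1) = (b.1 + 1) := by
      rw [← (hspec a).2, ← (hspec b).2, hab]
    exact Fin.ext (by omega)
  have himg : Finset.image c Finset.univ = μ.cells := by
    apply Finset.eq_of_subset_of_card_le
    · intro x hx
      simp only [Finset.mem_image] at hx
      obtain ⟨k, _, rfl⟩ := hx
      rw [YoungDiagram.mem_cells]
      exact (hspec k).1
    · rw [Finset.card_image_of_injective _ hinj, Finset.card_univ, Fintype.card_fin]
      exact le_of_eq s.2
  have hval : Finset.univ.val.map c = μ.cells.val := by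
    rw [← himg, Finset.image_val_of_injOn (hinj.injOn)]
  have : mult (s.resSeqT e) =
      (Finset.univ.val.map c).map (fun x : ℕ × ℕ => ((x.2 : ZMod e) - (x.1 : ZMod e))) := by
    rw [Multiset.map_map]
    rfl
  rw [this, hval]

theorem gammaOf_left_right {n e : ℕ} [NeZero e] (p : StdPair n) :
    gammaOf (p.left.resSeqT e) = gammaOf (p.right.resSeqT e) := by
  apply Quotient.sound
  left
  rw [mult_resSeqT, mult_resSeqT]
  rfl

theorem gammaOf_eq_of_shape {n e : ℕ} [NeZero e] (s u : StdTab n) (h : s.1.1 = u.1.1) :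
    gammaOf (s.resSeqT e) = gammaOf (u.resSeqT e) := by
  apply Quotient.sound
  left
  rw [mult_resSeqT, mult_resSeqT, h]

end CellOf
section SN
attribute [local instance] Classical.propDecidable
variable {K : Type*} [Field K] {t : K} {n : ℕ}
  {f : StdPair n → Hecke K t n} {γ : StdTab n → K} (hf : IsSNBasis K t n f γ)
include hf

theorem Fidem_mul_f (s : StdTab n) (p : StdPair n) :
    Fidem K t n f γ s * f p = if s = p.left then f p else 0 := by
  classical
  by_cases hs : s = p.left
  · subst hs
    rw [if_pos rfl, Fidem, smul_mul_assoc, hf.gammaMul p.left.diag p rfl]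
    show (γ p.left)⁻¹ • (γ p.left • f p) = f p
    rw [smul_smul, inv_mul_cancel₀ (hf.gammaNe _), one_smul]
  · rw [if_neg hs, Fidem, smul_mul_assoc, hf.gammaOrth s.diag p hs, smul_zero]

theorem f_mul_Fidem (s : StdTab n) (p : StdPair n) :
    f p * Fidem K t n f γ s = if p.right = s then f p else 0 := by
  classical
  by_cases hs : p.right = s
  · subst hs
    rw [if_pos rfl, Fidem, mul_smul_comm, hf.gammaMul p p.right.diag rfl]
    show (γ p.right)⁻¹ • (γ p.right • f p) = f p
    rw [smul_smul, inv_mul_cancel₀ (hf.gammaNe _), one_smul]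
  · rw [if_neg hs, Fidem, mul_smul_comm, hf.gammaOrth p s.diag hs, smul_zero]

/-- left-multiplication agreeing on the basis implies equality -/
theorem eq_of_mul_f (a b : Hecke K t n) (h : ∀ p, a * f p = b * f p) : a = b := by
  have hx : ∀ x ∈ Submodule.span K (Set.range f), a * x = b * x := by
    intro x hx
    induction hx using Submodule.span_induction with
    | mem x hxr => obtain ⟨p, rfl⟩ := hxr; exact h p
    | zero => simp
    | add x y _ _ hx hy => rw [mul_add, mul_add, hx, hy]
    | smul c x _ hx => rw [mul_smul_comm, mul_smul_comm, hx]
  have h1 := hx 1 (hf.span (by trivial))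
  simpa using h1

theorem comm_of_f (a : Hecke K t n) (h : ∀ p, a * f p = f p * a) :
    ∀ x, a * x = x * a := by
  intro x
  have hx : ∀ y ∈ Submodule.span K (Set.range f), a * y = y * a := by
    intro y hy
    induction hy using Submodule.span_induction with
    | mem y hyr => obtain ⟨p, rfl⟩ := hyr; exact h p
    | zero => simp
    | add x y _ _ hx hy => rw [mul_add, add_mul, hx, hy]
    | smul c x _ hx => rw [mul_smul_comm, smul_mul_assoc, hx]
  exact hx x (hf.span (by trivial))

end SN
section Lists

/-- candidate contents -/
def candList (n : ℕ) : List ℤ := (List.range (2 * n + 1)).map (fun c0 : ℕ => (c0 : ℤ) - n)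

theorem mem_candList {n : ℕ} {c : ℤ} : c ∈ candList n ↔ -(n : ℤ) ≤ c ∧ c ≤ n := by
  simp only [candList, List.mem_map, List.mem_range]
  constructor
  · rintro ⟨c0, hc0, rfl⟩
    omega
  · rintro ⟨h1, h2⟩
    exact ⟨(c + n).toNat, by omega, by omega⟩

def pairsList (e n : ℕ) [NeZero e] (i : nseq e n) : List (Fin n × ℤ) :=
  (List.finRange n).flatMap (fun k =>
    ((candList n).filter (fun c : ℤ => decide (((c : ZMod e)) ≠ i k))).map (fun c => (k, c)))

theorem mem_pairsList {e n : ℕ} [NeZero e] {i : nseq e n} {k : Fin n} {c : ℤ} :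
    (k, c) ∈ pairsList e n i ↔ c ∈ candList n ∧ ((c : ZMod e)) ≠ i k := by
  simp only [pairsList, List.mem_flatMap, List.mem_map, List.mem_filter, List.mem_finRange,
    decide_eq_true_eq]
  constructor
  · rintro ⟨k', -, c', ⟨hc1, hc2⟩, hkc⟩
    obtain ⟨rfl, rfl⟩ : k' = k ∧ c' = c := by
      constructor <;> [exact congrArg Prod.fst hkc; exact congrArg Prod.snd hkc]
    exact ⟨hc1, hc2⟩
  · rintro ⟨h1, h2⟩
    exact ⟨k, trivial, c, ⟨h1, h2⟩, rfl⟩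

theorem list_prod_inv {K : Type*} [Field K] {O : Subring K} (l : List K)
    (h : ∀ x ∈ l, ∃ w ∈ O, x * w = 1) : ∃ w ∈ O, l.prod * w = 1 := by
  induction l with
  | nil => exact ⟨1, one_mem O, one_mul 1⟩
  | cons x xs ih =>
      obtain ⟨wx, hwx, hx⟩ := h x List.mem_cons_self
      obtain ⟨wr, hwr, hr⟩ := ih (fun y hy => h y (List.mem_cons_of_mem x hy))
      refine ⟨wx * wr, mul_mem hwx hwr, ?_⟩
      rw [List.prod_cons, mul_mul_mul_comm, hx, hr, one_mul]

theorem list_mul_f {K : Type*} [Field K] {t : K} {n : ℕ} {f : StdPair n → Hecke K t n}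
    {α : Type*} (l : List α) (g : α → Hecke K t n) (lam : α → K) (p : StdPair n)
    (h : ∀ x ∈ l, g x * f p = lam x • f p) :
    (l.map g).prod * f p = (l.map lam).prod • f p := by
  induction l with
  | nil => simp
  | cons x xs ih =>
      simp only [List.map_cons, List.prod_cons]
      rw [mul_assoc, ih (fun y hy => h y (List.mem_cons_of_mem x hy)),
        mul_smul_comm, h x List.mem_cons_self, smul_smul, mul_comm]

end Lists

section Mem
variable {K : Type*} [Field K] {t : K} {e n : ℕ} [NeZero e] {O : Subring K}

theorem algebraMap_mem_HOsub {x : K} (hx : x ∈ O) :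
    algebraMap K (Hecke K t n) x ∈ HOsub K t n O :=
  Subring.subset_closure (Or.inl ⟨x, hx, rfl⟩)

theorem Tgen_mem_HOsub (r : Fin (n - 1)) : Tgen K t n r ∈ HOsub K t n O :=
  Subring.subset_closure (Or.inr ⟨r, rfl⟩)

theorem Tword_mem_HOsub (w : List ℕ) : Tword K t n w ∈ HOsub K t n O := by
  apply list_prod_mem
  intro x hx
  simp only [List.mem_map] at hx
  obtain ⟨m, -, rfl⟩ := hx
  split
  · exact Tgen_mem_HOsub _
  · exact one_mem _

theorem JM_mem_HOsub (ht : t ≠ 0) (hO : IsIdemSubring K O t e n) (k : ℕ) :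
    JM K t n k ∈ HOsub K t n O := by
  apply sum_mem
  intro j _
  rw [Algebra.smul_def]
  exact mul_mem (algebraMap_mem_HOsub (zpow_mem_O ht hO _)) (Tword_mem_HOsub _)

end Mem
section Main
attribute [local instance] Classical.propDecidable
variable {K : Type*} [Field K] {t : K} {e n : ℕ} [NeZero e] {O : Subring K}
  {f : StdPair n → Hecke K t n} {γ : StdTab n → K}

theorem fres_eq_sum (i : nseq e n) :
    fres K t e n f γ i =
      ∑ s ∈ (@Finset.univ (StdTab n) (@Fintype.ofFinite _ (stdtab_finite n))).filter
        (fun s => s.resSeqT e = i), Fidem K t n f γ s := by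
  letI : Fintype (StdTab n) := @Fintype.ofFinite _ (stdtab_finite n)
  rw [fres]
  have h1 : ∀ s : StdTab n, (∑ᶠ (_ : s.resSeqT e = i), Fidem K t n f γ s) =
      if s.resSeqT e = i then Fidem K t n f γ s else 0 := fun s => finsum_eq_if
  rw [finsum_congr h1, finsum_eq_sum_of_fintype, ← Finset.sum_filter]

theorem fres_mul_f (hf : IsSNBasis K t n f γ) (i : nseq e n) (p : StdPair n) :
    fres K t e n f γ i * f p = if p.left.resSeqT e = i then f p else 0 := by
  letI : Fintype (StdTab n) := @Fintype.ofFinite _ (stdtab_finite n)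
  rw [fres_eq_sum, Finset.sum_mul]
  have h1 : ∀ s ∈ Finset.univ.filter (fun s : StdTab n => s.resSeqT e = i),
      Fidem K t n f γ s * f p = if p.left = s then f p else 0 := by
    intro s _
    rw [Fidem_mul_f hf]
    by_cases h : s = p.left
    · rw [if_pos h, if_pos h.symm]
    · rw [if_neg h, if_neg (fun hc => h hc.symm)]
  rw [Finset.sum_congr rfl h1, Finset.sum_ite_eq]
  simp only [Finset.mem_filter, Finset.mem_univ, true_and]

theorem f_mul_fres (hf : IsSNBasis K t n f γ) (i : nseq e n) (p : StdPair n) :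
    f p * fres K t e n f γ i = if p.right.resSeqT e = i then f p else 0 := by
  letI : Fintype (StdTab n) := @Fintype.ofFinite _ (stdtab_finite n)
  rw [fres_eq_sum, Finset.mul_sum]
  have h1 : ∀ s ∈ Finset.univ.filter (fun s : StdTab n => s.resSeqT e = i),
      f p * Fidem K t n f γ s = if p.right = s then f p else 0 := fun s _ => f_mul_Fidem hf s p
  rw [Finset.sum_congr rfl h1, Finset.sum_ite_eq]
  simp only [Finset.mem_filter, Finset.mem_univ, true_and]

theorem fgam_mul_f (hf : IsSNBasis K t n f γ) (g : Qtilde e n) (p : StdPair n) :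
    fgam K t e n f γ g * f p = if gammaOf (p.left.resSeqT e) = g then f p else 0 := by
  rw [fgam, Finset.sum_mul]
  have h1 : ∀ i ∈ Iγ e n g, fres K t e n f γ i * f p =
      if p.left.resSeqT e = i then f p else 0 := fun i _ => fres_mul_f hf i p
  rw [Finset.sum_congr rfl h1, Finset.sum_ite_eq]
  simp [Iγ]

theorem f_mul_fgam (hf : IsSNBasis K t n f γ) (g : Qtilde e n) (p : StdPair n) :
    f p * fgam K t e n f γ g = if gammaOf (p.right.resSeqT e) = g then f p else 0 := by
  rw [fgam, Finset.mul_sum]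
  have h1 : ∀ i ∈ Iγ e n g, f p * fres K t e n f γ i =
      if p.right.resSeqT e = i then f p else 0 := fun i _ => f_mul_fres hf i p
  rw [Finset.sum_congr rfl h1, Finset.sum_ite_eq]
  simp [Iγ]

end Main
section MainMem
attribute [local instance] Classical.propDecidable
variable {K : Type*} [Field K] {t : K} {e n : ℕ} [NeZero e] {O : Subring K}
  {f : StdPair n → Hecke K t n} {γ : StdTab n → K}

theorem fres_mem (ht : t ≠ 0) (hO : IsIdemSubring K O t e n)
    (hf : IsSNBasis K t n f γ) (i : nseq e n) :
    fres K t e n f γ i ∈ HOsub K t n O := by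
  letI : Fintype (StdTab n) := @Fintype.ofFinite _ (stdtab_finite n)
  -- the interpolation element
  set L := pairsList e n i with hL
  set Xfac : Fin n × ℤ → Hecke K t n :=
    fun kc => JM K t n (kc.1.1 + 1) - algebraMap K (Hecke K t n) (qint t kc.2) with hXfac
  set X : Hecke K t n := (L.map Xfac).prod with hX
  set lam : StdTab n → K :=
    fun s => ((L.map (fun kc => qint t (s.contentT (kc.1.1 + 1)) - qint t kc.2)).prod) with hlam
  have hXmem : X ∈ HOsub K t n O := by
    apply list_prod_mem
    intro x hx
    simp only [List.mem_map] at hx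
    obtain ⟨kc, -, rfl⟩ := hx
    exact sub_mem (JM_mem_HOsub ht hO _) (algebraMap_mem_HOsub (hO.qint_mem _))
  have hXact : ∀ p : StdPair n, X * f p = lam p.left • f p := by
    intro p
    apply list_mul_f
    intro kc _
    rw [sub_mul, hf.eigL p (kc.1.1 + 1) (by omega) (by omega), ← Algebra.smul_def]
    exact (sub_smul (_ : K) _ _).symm
  -- vanishing of the eigenvalue off `Std(i)`
  have hlam0 : ∀ s : StdTab n, s.resSeqT e ≠ i → lam s = 0 := by
    intro s hs
    obtain ⟨k, hk⟩ := Function.ne_iff.mp hs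
    have hbd := content_bound s k
    have hmem : (k, s.contentT (k.1 + 1)) ∈ L := by
      rw [hL, mem_pairsList]
      refine ⟨mem_candList.mpr ⟨by omega, by omega⟩, ?_⟩
      rw [resSeqT_eq_cast e s k]
      exact hk
    apply List.prod_eq_zero
    simp only [List.mem_map]
    exact ⟨(k, s.contentT (k.1 + 1)), hmem, by simp⟩
  -- invertibility of the eigenvalue on `Std(i)`
  have hlamU : ∀ s : StdTab n, s.resSeqT e = i → ∃ w ∈ O, lam s * w = 1 := by
    intro s hs
    apply list_prod_inv
    intro x hx
    simp only [List.mem_map] at hx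
    obtain ⟨⟨k, c⟩, hkc, rfl⟩ := hx
    rw [hL, mem_pairsList] at hkc
    dsimp only
    apply factor_unit ht hO
    rw [resSeqT_eq_cast e s k, hs]
    intro hcon
    exact hkc.2 hcon.symm
  -- choose the inverses
  have hws : ∀ s : StdTab n, ∃ wv, wv ∈ O ∧ (s.resSeqT e = i → lam s * wv = 1) := by
    intro s
    by_cases hs : s.resSeqT e = i
    · obtain ⟨w, hw1, hw2⟩ := hlamU s hs
      exact ⟨w, hw1, fun _ => hw2⟩
    · exact ⟨1, one_mem O, fun h => absurd h hs⟩
  choose w hwO hww using hws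
  set lst := (Finset.univ.filter (fun s : StdTab n => s.resSeqT e = i)).toList with hlst
  set Y : Hecke K t n := 1 - (lst.map (fun s => 1 - w s • X)).prod with hY
  have hYmem : Y ∈ HOsub K t n O := by
    refine sub_mem (one_mem _) (list_prod_mem ?_)
    intro x hx
    simp only [List.mem_map] at hx
    obtain ⟨s, -, rfl⟩ := hx
    rw [Algebra.smul_def]
    exact sub_mem (one_mem _) (mul_mem (algebraMap_mem_HOsub (hwO s)) hXmem)
  have hYact : ∀ p : StdPair n, Y * f p = fres K t e n f γ i * f p := by
    intro p
    rw [fres_mul_f hf i p, hY, sub_mul, one_mul]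
    have hact : (lst.map (fun s => 1 - w s • X)).prod * f p =
        ((lst.map (fun s => 1 - w s * lam p.left)).prod) • f p := by
      apply list_mul_f
      intro s _
      rw [sub_mul, one_mul, smul_mul_assoc, hXact p, smul_smul]
      nth_rewrite 1 [show f p = (1 : K) • f p from (one_smul K (f p)).symm]
      exact (sub_smul (1 : K) _ _).symm

    rw [hact]
    by_cases hres : p.left.resSeqT e = i
    · rw [if_pos hres]
      have hzero : (lst.map (fun s => 1 - w s * lam p.left)).prod = 0 := by
        apply List.prod_eq_zero
        simp only [List.mem_map]
        refine ⟨p.left, ?_, ?_⟩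
        · rw [hlst, Finset.mem_toList, Finset.mem_filter]
          exact ⟨Finset.mem_univ _, hres⟩
        · rw [mul_comm, hww p.left hres, sub_self]
      rw [hzero, zero_smul, sub_zero]
    · rw [if_neg hres]
      have hone : (lst.map (fun s => 1 - w s * lam p.left)).prod = 1 := by
        apply List.prod_eq_one
        intro x hx
        simp only [List.mem_map] at hx
        obtain ⟨s, -, rfl⟩ := hx
        rw [hlam0 p.left hres, mul_zero, sub_zero]
      rw [hone, one_smul, sub_self]
  have : Y = fres K t e n f γ i := eq_of_mul_f hf _ _ hYact
  rwa [← this]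

end MainMem


/-- For an `e`-idempotent subring `(O, t)`, each `f_γ^O = ∑_{i ∈ I^γ} f_i^O` is a central
idempotent of `H^O`, the `f_γ^O` are pairwise orthogonal and sum to `1`; hence
`H^O = ⊕_{γ ∈ Q̃⁺_n} H^O_γ` with `H^O_γ = H^O f_γ^O`. -/
theorem block_idempotent_decomposition
    (K : Type*) [Field K] (t : K) (ht : t ≠ 0) (e n : ℕ) [NeZero e]
    (O : Subring K) (hO : IsIdemSubring K O t e n)
    (f : StdPair n → Hecke K t n) (γ : StdTab n → K) (hf : IsSNBasis K t n f γ)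
    (st : Hecke K t n →ₗ[K] Hecke K t n) (hst : IsStarHecke K t n st)
    (hstar : IsStarBasis st f) :
    (∀ g : Qtilde e n, fgam K t e n f γ g ∈ HOsub K t n O) ∧
    (∀ g : Qtilde e n, fgam K t e n f γ g * fgam K t e n f γ g = fgam K t e n f γ g) ∧
    (∀ g : Qtilde e n, ∀ h ∈ HOsub K t n O,
      fgam K t e n f γ g * h = h * fgam K t e n f γ g) ∧
    (∀ g g' : Qtilde e n, g ≠ g' → fgam K t e n f γ g * fgam K t e n f γ g' = 0) ∧
    (∑ᶠ g : Qtilde e n, fgam K t e n f γ g) = 1 := by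
  classical
  refine ⟨?_, ?_, ?_, ?_, ?_⟩
  · -- membership in `H^O`
    intro g
    rw [fgam]
    exact sum_mem (fun i _ => fres_mem ht hO hf i)
  · -- idempotency
    intro g
    apply eq_of_mul_f hf
    intro p
    by_cases hc : gammaOf (p.left.resSeqT e) = g
    · rw [mul_assoc, fgam_mul_f hf, if_pos hc, fgam_mul_f hf, if_pos hc]
    · rw [mul_assoc, fgam_mul_f hf, if_neg hc, mul_zero]
  · -- centrality
    intro g h _
    refine comm_of_f hf _ ?_ h
    intro p
    rw [fgam_mul_f hf, f_mul_fgam hf, ← gammaOf_left_right p]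
  · -- orthogonality
    intro g g' hne
    apply eq_of_mul_f hf _ 0
    intro p
    rw [zero_mul, mul_assoc, fgam_mul_f hf]
    by_cases hc : gammaOf (p.left.resSeqT e) = g'
    · rw [if_pos hc, fgam_mul_f hf, if_neg (by rw [hc]; exact fun hgg => hne hgg.symm)]
    · rw [if_neg hc, mul_zero]
  · -- the `f_γ` sum to `1`
    haveI : Finite (nseq e n) := by infer_instance
    haveI : Finite (Qtilde e n) := Quotient.finite _
    letI : Fintype (Qtilde e n) := Fintype.ofFinite _
    rw [finsum_eq_sum_of_fintype]
    apply eq_of_mul_f hf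
    intro p
    rw [Finset.sum_mul, one_mul]
    have h1 : ∀ g ∈ (Finset.univ : Finset (Qtilde e n)), fgam K t e n f γ g * f p =
        if gammaOf (p.left.resSeqT e) = g then f p else 0 := fun g _ => fgam_mul_f hf g p
    rw [Finset.sum_congr rfl h1, Finset.sum_ite_eq, if_pos (Finset.mem_univ _)]


end QH
end
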